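/- arXiv:1611.00424 — 8 statements merged into one kernel-verified Lean document; each statement's English description precedes it below -/
import Mathlib

section
/- Let d ≥ 2 be an integer, β > 0, J > 0, θ = tanh(βJ), (h_k)_{k≥1} a real sequence, and (b_k)_{k≥1} a real sequence. Consider the rooted tree whose vertices at generation k are the words of length k over an alphabet of d symbols (each vertex having exactly d children) and, for each n ≥ 1, the probability measure μ_n on configurations σ : V_n → {-1,1} (where V_n is the set of all words of length between 1 and n) given by μ_n(σ) = Z_n^{-1} exp( βJ Σ_{edges ⟨x,y⟩ of V_n} σ_x σ_y + Σ_{k=1}^{n-1} Σ_{x in generation k} h_k σ_x + Σ_{x in generation n} b_n σ_x ), where Z_n is the normalizing constant. Then the family (μ_n)_{n≥1} is compatible — i.e., for every n ≥ 2 and every configuration σ on V_{n-1}, summing μ_n(σ ∨ ω) over all configurations ω on generation n yields μ_{n-1}(σ) — if and only if for every n ≥ 2 one has b_{n-1} = h_{n-1} + d·arctanh(θ·tanh(b_n)). -/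
/-- The inverse hyperbolic tangent, `arctanh x = (1/2)·log((1+x)/(1-x))`. -/
noncomputable def arctanh (x : ℝ) : ℝ := (1 / 2) * Real.log ((1 + x) / (1 - x))

/-- A spin configuration on `V_n`, the vertices of the Cayley tree at generations
`1, …, n` (words of length `k` over an alphabet of `d` symbols, for `1 ≤ k ≤ n`);
here `n = m + 1`.  A vertex is `⟨k, w⟩` with `k : Fin n` and `w` a word of length
`k + 1`, i.e. the vertex is at generation `k + 1`. -/
abbrev CayleyConf (d n : ℕ) := (Σ k : Fin n, (Fin (k.1 + 1) → Fin d)) → Bool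

/-- The spin value of a site: `true ↦ +1`, `false ↦ -1`. -/
noncomputable def spin (s : Bool) : ℝ := if s then 1 else -1

/-- The exponent in the splitting Gibbs measure on `V_{m+1}`:
`βJ Σ_{edges} σ_x σ_y + Σ_{k=1}^{m} Σ_{x ∈ W_k} h_k σ_x + Σ_{x ∈ W_{m+1}} b_{m+1} σ_x`,
the edges of `V_{m+1}` being the pairs `{w, w·i}` with `w` of length `1 ≤ k ≤ m`. -/
noncomputable def isingExponent (d : ℕ) (β J : ℝ) (h b : ℕ → ℝ) (m : ℕ)
    (σ : CayleyConf d (m + 1)) : ℝ :=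
  β * J * ∑ k : Fin m, ∑ w : Fin (k.1 + 1) → Fin d, ∑ i : Fin d,
      spin (σ ⟨⟨k.1, Nat.lt_succ_of_lt k.isLt⟩, w⟩) *
        spin (σ ⟨⟨k.1 + 1, Nat.succ_lt_succ k.isLt⟩, Fin.snoc w i⟩)
    + (∑ k : Fin m, ∑ w : Fin (k.1 + 1) → Fin d,
        h (k.1 + 1) * spin (σ ⟨⟨k.1, Nat.lt_succ_of_lt k.isLt⟩, w⟩))
    + ∑ w : Fin (m + 1) → Fin d,
        b (m + 1) * spin (σ ⟨⟨m, Nat.lt_succ_self m⟩, w⟩)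

/-- The partition function of the splitting Gibbs measure on `V_{m+1}`. -/
noncomputable def isingZ (d : ℕ) (β J : ℝ) (h b : ℕ → ℝ) (m : ℕ) : ℝ :=
  ∑ σ : CayleyConf d (m + 1), Real.exp (isingExponent d β J h b m σ)

/-- The splitting Gibbs measure `μ_{m+1}` on configurations on `V_{m+1}`. -/
noncomputable def isingMu (d : ℕ) (β J : ℝ) (h b : ℕ → ℝ) (m : ℕ)
    (σ : CayleyConf d (m + 1)) : ℝ :=
  Real.exp (isingExponent d β J h b m σ) / isingZ d β J h b m

/-- The concatenation `σ ∨ ω` of a configuration `σ` on `V_{m+1}` with a configuration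
`ω` on generation `m + 2`. -/
def joinConf (d m : ℕ) (σ : CayleyConf d (m + 1))
    (ω : (Fin (m + 2) → Fin d) → Bool) : CayleyConf d (m + 2) :=
  fun v =>
    if hv : v.1.1 < m + 1 then σ ⟨⟨v.1.1, hv⟩, v.2⟩
    else ω (fun j =>
      v.2 ⟨j.1, lt_of_lt_of_le j.isLt (Nat.succ_le_succ (Nat.le_of_not_lt hv))⟩)


lemma arctanh_tanh_mul_tanh (x y : ℝ) :
    arctanh (Real.tanh x * Real.tanh y) =
      (1/2) * Real.log (Real.cosh (x + y) / Real.cosh (x - y)) := by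
  unfold arctanh
  congr 1
  have hx := Real.cosh_pos (x := x)
  have hy := Real.cosh_pos (x := y)
  rw [Real.tanh_eq_sinh_div_cosh, Real.tanh_eq_sinh_div_cosh,
    Real.cosh_add, Real.cosh_sub]
  field_simp

lemma scalar_iff (d : ℕ) (x H B y : ℝ) :
    (Real.exp (H - B) * (2 * Real.cosh (x + y)) ^ d =
     Real.exp (B - H) * (2 * Real.cosh (-x + y)) ^ d)
    ↔ B = H + d * arctanh (Real.tanh x * Real.tanh y) := by
  rw [arctanh_tanh_mul_tanh]
  have hxy : (-x + y) = -(x - y) := by ring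
  rw [hxy, Real.cosh_neg]
  have h1 : (0:ℝ) < 2 * Real.cosh (x + y) := by positivity
  have h2 : (0:ℝ) < 2 * Real.cosh (x - y) := by positivity
  have e1 : (2 * Real.cosh (x + y)) ^ d = Real.exp (d * Real.log (2 * Real.cosh (x + y))) := by
    rw [Real.exp_nat_mul, Real.exp_log h1]
  have e2 : (2 * Real.cosh (x - y)) ^ d = Real.exp (d * Real.log (2 * Real.cosh (x - y))) := by
    rw [Real.exp_nat_mul, Real.exp_log h2]
  rw [e1, e2, ← Real.exp_add, ← Real.exp_add, Real.exp_eq_exp]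
  have l1 : Real.log (2 * Real.cosh (x + y)) = Real.log 2 + Real.log (Real.cosh (x + y)) :=
    Real.log_mul (by norm_num) (ne_of_gt (Real.cosh_pos _))
  have l2 : Real.log (2 * Real.cosh (x - y)) = Real.log 2 + Real.log (Real.cosh (x - y)) :=
    Real.log_mul (by norm_num) (ne_of_gt (Real.cosh_pos _))
  have ld : Real.log (Real.cosh (x + y) / Real.cosh (x - y)) =
      Real.log (Real.cosh (x + y)) - Real.log (Real.cosh (x - y)) :=
    Real.log_div (ne_of_gt (Real.cosh_pos _)) (ne_of_gt (Real.cosh_pos _))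
  rw [l1, l2, ld]
  constructor <;> intro hE <;> linarith

lemma joinConf_lt (d m : ℕ) (σ : CayleyConf d (m + 1))
    (ω : (Fin (m + 2) → Fin d) → Bool) (k : ℕ) (hk : k < m + 1) (hk' : k < m + 2)
    (w : Fin (k + 1) → Fin d) :
    joinConf d m σ ω ⟨⟨k, hk'⟩, w⟩ = σ ⟨⟨k, hk⟩, w⟩ := by
  simp only [joinConf, dif_pos hk]

lemma joinConf_last (d m : ℕ) (σ : CayleyConf d (m + 1))
    (ω : (Fin (m + 2) → Fin d) → Bool) (hk' : m + 1 < m + 2)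
    (w : Fin (m + 2) → Fin d) :
    joinConf d m σ ω ⟨⟨m + 1, hk'⟩, w⟩ = ω w := by
  simp only [joinConf, dif_neg (lt_irrefl (m+1))]

/-- The splitting equivalence. -/
def joinEquiv (d m : ℕ) :
    (CayleyConf d (m + 1) × ((Fin (m + 2) → Fin d) → Bool)) ≃ CayleyConf d (m + 2) where
  toFun p := joinConf d m p.1 p.2
  invFun τ :=
    (fun v => τ ⟨⟨v.1.1, Nat.lt_succ_of_lt v.1.isLt⟩, v.2⟩,
     fun w => τ ⟨⟨m + 1, Nat.lt_succ_self _⟩, w⟩)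
  left_inv p := by
    obtain ⟨σ, ω⟩ := p
    refine Prod.ext ?_ ?_ <;> funext v
    · obtain ⟨⟨k, hk⟩, w⟩ := v
      exact joinConf_lt d m σ ω k hk _ w
    · exact joinConf_last d m σ ω _ v
  right_inv τ := by
    funext v
    obtain ⟨⟨k, hk⟩, w⟩ := v
    by_cases hkm : k < m + 1
    · exact joinConf_lt d m _ _ k hkm hk w
    · have hk1 : k = m + 1 := by omega
      subst hk1
      exact joinConf_last d m _ _ hk w

lemma jl (d m : ℕ) (σ : CayleyConf d (m + 1)) (ω : (Fin (m + 2) → Fin d) → Bool)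
    (k : Fin m) (pf : (k : ℕ) < m + 2) (w : Fin ((k : ℕ) + 1) → Fin d) :
    joinConf d m σ ω ⟨⟨k.1, pf⟩, w⟩ = σ ⟨⟨k.1, Nat.lt_succ_of_lt k.isLt⟩, w⟩ := by
  simp only [joinConf, dif_pos (Nat.lt_succ_of_lt k.isLt)]

lemma jl2 (d m : ℕ) (σ : CayleyConf d (m + 1)) (ω : (Fin (m + 2) → Fin d) → Bool)
    (k : Fin m) (pf : (k : ℕ) + 1 < m + 2) (w : Fin ((k : ℕ) + 1 + 1) → Fin d) :
    joinConf d m σ ω ⟨⟨k.1 + 1, pf⟩, w⟩ = σ ⟨⟨k.1 + 1, Nat.succ_lt_succ k.isLt⟩, w⟩ := by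
  simp only [joinConf, dif_pos (Nat.succ_lt_succ k.isLt)]

lemma jm (d m : ℕ) (σ : CayleyConf d (m + 1)) (ω : (Fin (m + 2) → Fin d) → Bool)
    (pf : m < m + 2) (w : Fin (m + 1) → Fin d) :
    joinConf d m σ ω ⟨⟨m, pf⟩, w⟩ = σ ⟨⟨m, Nat.lt_succ_self m⟩, w⟩ := by
  simp only [joinConf, dif_pos (Nat.lt_succ_self m)]

lemma jtop (d m : ℕ) (σ : CayleyConf d (m + 1)) (ω : (Fin (m + 2) → Fin d) → Bool)
    (pf : m + 1 < m + 2) (w : Fin (m + 1 + 1) → Fin d) :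
    joinConf d m σ ω ⟨⟨m + 1, pf⟩, w⟩ = ω w := by
  simp only [joinConf, dif_neg (lt_irrefl (m + 1))]

lemma sum_snoc_reindex {d m : ℕ} (f : (Fin (m + 1 + 1) → Fin d) → ℝ) :
    ∑ u : Fin (m + 1 + 1) → Fin d, f u
      = ∑ w : Fin (m + 1) → Fin d, ∑ i : Fin d, f (Fin.snoc w i) := by
  rw [← Equiv.sum_comp (Fin.snocEquiv (fun _ : Fin (m + 2) => Fin d)) f,
    Fintype.sum_prod_type]
  rw [Finset.sum_comm]
  rfl

lemma exponent_join (d : ℕ) (β J : ℝ) (h b : ℕ → ℝ) (m : ℕ)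
    (σ : CayleyConf d (m + 1)) (ω : (Fin (m + 2) → Fin d) → Bool) :
    isingExponent d β J h b (m + 1) (joinConf d m σ ω)
      = isingExponent d β J h b m σ
        - (∑ w : Fin (m + 1) → Fin d, b (m + 1) * spin (σ ⟨⟨m, Nat.lt_succ_self m⟩, w⟩))
        + (∑ w : Fin (m + 1) → Fin d, h (m + 1) * spin (σ ⟨⟨m, Nat.lt_succ_self m⟩, w⟩))
        + β * J * (∑ w : Fin (m + 1) → Fin d, ∑ i : Fin d,
            spin (σ ⟨⟨m, Nat.lt_succ_self m⟩, w⟩) * spin (ω (Fin.snoc w i)))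
        + ∑ w : Fin (m + 1) → Fin d, ∑ i : Fin d,
            b (m + 2) * spin (ω (Fin.snoc w i)) := by
  unfold isingExponent
  rw [Fin.sum_univ_castSucc (f := fun k : Fin (m + 1) =>
    ∑ w : Fin (k.1 + 1) → Fin d, ∑ i : Fin d,
      spin (joinConf d m σ ω ⟨⟨k.1, Nat.lt_succ_of_lt k.isLt⟩, w⟩) *
        spin (joinConf d m σ ω ⟨⟨k.1 + 1, Nat.succ_lt_succ k.isLt⟩, Fin.snoc w i⟩))]
  rw [Fin.sum_univ_castSucc (f := fun k : Fin (m + 1) =>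
    ∑ w : Fin (k.1 + 1) → Fin d,
      h (k.1 + 1) * spin (joinConf d m σ ω ⟨⟨k.1, Nat.lt_succ_of_lt k.isLt⟩, w⟩))]
  simp only [Fin.coe_castSucc, Fin.val_last, jl, jl2, jm, jtop]
  rw [sum_snoc_reindex (fun u => b (m + 1 + 1) * spin (ω u))]
  ring
lemma prod_snoc_reindex {d m : ℕ} (f : (Fin (m + 1 + 1) → Fin d) → ℝ) :
    ∏ u : Fin (m + 1 + 1) → Fin d, f u
      = ∏ w : Fin (m + 1) → Fin d, ∏ i : Fin d, f (Fin.snoc w i) := by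
  rw [← Equiv.prod_comp (Fin.snocEquiv (fun _ : Fin (m + 2) => Fin d)) f,
    Fintype.prod_prod_type]
  rw [Finset.prod_comm]
  rfl

lemma sum_exp_spin {A : Type*} [Fintype A] [DecidableEq A] (C : A → ℝ) :
    ∑ ω : A → Bool, Real.exp (∑ u, C u * spin (ω u)) = ∏ u, (2 * Real.cosh (C u)) := by
  calc ∑ ω : A → Bool, Real.exp (∑ u, C u * spin (ω u))
      = ∑ ω : A → Bool, ∏ u, Real.exp (C u * spin (ω u)) := by
        simp [Real.exp_sum]
    _ = ∏ u, ∑ s : Bool, Real.exp (C u * spin s) := (Fintype.prod_sum (fun u (s : Bool) => Real.exp (C u * spin s))).symm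
    _ = ∏ u, (2 * Real.cosh (C u)) := by
        refine Finset.prod_congr rfl fun u _ => ?_
        simp [spin, Real.cosh_eq]
        ring

lemma sum_exp_join (d : ℕ) (β J : ℝ) (h b : ℕ → ℝ) (m : ℕ) (σ : CayleyConf d (m + 1)) :
    ∑ ω : (Fin (m + 2) → Fin d) → Bool,
        Real.exp (isingExponent d β J h b (m + 1) (joinConf d m σ ω))
      = Real.exp (isingExponent d β J h b m σ)
        * ∏ w : Fin (m + 1) → Fin d,
            (Real.exp ((h (m + 1) - b (m + 1)) * spin (σ ⟨⟨m, Nat.lt_succ_self m⟩, w⟩))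
              * (2 * Real.cosh
                  (β * J * spin (σ ⟨⟨m, Nat.lt_succ_self m⟩, w⟩) + b (m + 2))) ^ d) := by
  classical
  have hsum : ∀ ω : (Fin (m + 2) → Fin d) → Bool,
      ∑ u : Fin (m + 1 + 1) → Fin d,
          (β * J * spin (σ ⟨⟨m, Nat.lt_succ_self m⟩, Fin.init u⟩) + b (m + 2)) * spin (ω u)
        = β * J * (∑ w : Fin (m + 1) → Fin d, ∑ i : Fin d,
              spin (σ ⟨⟨m, Nat.lt_succ_self m⟩, w⟩) * spin (ω (Fin.snoc w i)))
          + ∑ w : Fin (m + 1) → Fin d, ∑ i : Fin d,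
              b (m + 2) * spin (ω (Fin.snoc w i)) := by
    intro ω
    rw [sum_snoc_reindex (f := fun u =>
      (β * J * spin (σ ⟨⟨m, Nat.lt_succ_self m⟩, Fin.init u⟩) + b (m + 2)) * spin (ω u))]
    rw [Finset.mul_sum, ← Finset.sum_add_distrib]
    refine Finset.sum_congr rfl fun w _ => ?_
    rw [Finset.mul_sum, ← Finset.sum_add_distrib]
    refine Finset.sum_congr rfl fun i _ => ?_
    rw [Fin.init_snoc]
    ring
  have step1 : ∀ ω : (Fin (m + 2) → Fin d) → Bool,
      isingExponent d β J h b (m + 1) (joinConf d m σ ω)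
        = (isingExponent d β J h b m σ
            + ∑ w : Fin (m + 1) → Fin d,
                (h (m + 1) - b (m + 1)) * spin (σ ⟨⟨m, Nat.lt_succ_self m⟩, w⟩))
          + ∑ u : Fin (m + 1 + 1) → Fin d,
              (β * J * spin (σ ⟨⟨m, Nat.lt_succ_self m⟩, Fin.init u⟩) + b (m + 2))
                * spin (ω u) := by
    intro ω
    rw [exponent_join, hsum ω]
    simp only [sub_mul, Finset.sum_sub_distrib]
    ring
  calc ∑ ω : (Fin (m + 2) → Fin d) → Bool,
        Real.exp (isingExponent d β J h b (m + 1) (joinConf d m σ ω))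
      = ∑ ω : (Fin (m + 2) → Fin d) → Bool,
          Real.exp (isingExponent d β J h b m σ
            + ∑ w : Fin (m + 1) → Fin d,
                (h (m + 1) - b (m + 1)) * spin (σ ⟨⟨m, Nat.lt_succ_self m⟩, w⟩))
          * Real.exp (∑ u : Fin (m + 1 + 1) → Fin d,
              (β * J * spin (σ ⟨⟨m, Nat.lt_succ_self m⟩, Fin.init u⟩) + b (m + 2))
                * spin (ω u)) := by
        refine Finset.sum_congr rfl fun ω _ => ?_
        rw [step1 ω, Real.exp_add]
    _ = Real.exp (isingExponent d β J h b m σ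
            + ∑ w : Fin (m + 1) → Fin d,
                (h (m + 1) - b (m + 1)) * spin (σ ⟨⟨m, Nat.lt_succ_self m⟩, w⟩))
          * ∏ u : Fin (m + 1 + 1) → Fin d,
              (2 * Real.cosh
                (β * J * spin (σ ⟨⟨m, Nat.lt_succ_self m⟩, Fin.init u⟩) + b (m + 2))) := by
        rw [← Finset.mul_sum, sum_exp_spin]
    _ = Real.exp (isingExponent d β J h b m σ)
        * ∏ w : Fin (m + 1) → Fin d,
            (Real.exp ((h (m + 1) - b (m + 1)) * spin (σ ⟨⟨m, Nat.lt_succ_self m⟩, w⟩))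
              * (2 * Real.cosh
                  (β * J * spin (σ ⟨⟨m, Nat.lt_succ_self m⟩, w⟩) + b (m + 2))) ^ d) := by
        rw [prod_snoc_reindex (d := d) (m := m) (f := fun u =>
          2 * Real.cosh
            (β * J * spin (σ ⟨⟨m, Nat.lt_succ_self m⟩, Fin.init u⟩) + b (m + 2)))]
        rw [Real.exp_add, Real.exp_sum, Finset.prod_mul_distrib, mul_assoc]
        congr 1
        congr 1
        refine Fintype.prod_congr _ _ fun w => ?_
        simp only [Fin.init_snoc]
        rw [Finset.prod_const, Finset.card_univ, Fintype.card_fin]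


noncomputable def gfun (d : ℕ) (β J : ℝ) (h b : ℕ → ℝ) (m : ℕ) (s : Bool) : ℝ :=
  Real.exp ((h (m + 1) - b (m + 1)) * spin s)
    * (2 * Real.cosh (β * J * spin s + b (m + 2))) ^ d

lemma gfun_pos (d : ℕ) (β J : ℝ) (h b : ℕ → ℝ) (m : ℕ) (s : Bool) :
    0 < gfun d β J h b m s := by
  unfold gfun
  have := Real.cosh_pos (β * J * spin s + b (m + 2))
  positivity

lemma isingZ_pos (d : ℕ) (β J : ℝ) (h b : ℕ → ℝ) (m : ℕ) :
    0 < isingZ d β J h b m := by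
  unfold isingZ
  exact Finset.sum_pos (fun σ _ => Real.exp_pos _) Finset.univ_nonempty

lemma sum_exp_join' (d : ℕ) (β J : ℝ) (h b : ℕ → ℝ) (m : ℕ) (σ : CayleyConf d (m + 1)) :
    ∑ ω : (Fin (m + 2) → Fin d) → Bool,
        Real.exp (isingExponent d β J h b (m + 1) (joinConf d m σ ω))
      = Real.exp (isingExponent d β J h b m σ)
        * ∏ w : Fin (m + 1) → Fin d, gfun d β J h b m (σ ⟨⟨m, Nat.lt_succ_self m⟩, w⟩) :=
  sum_exp_join d β J h b m σ

lemma Z_succ (d : ℕ) (β J : ℝ) (h b : ℕ → ℝ) (m : ℕ) :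
    isingZ d β J h b (m + 1)
      = ∑ σ : CayleyConf d (m + 1),
          Real.exp (isingExponent d β J h b m σ)
            * ∏ w : Fin (m + 1) → Fin d, gfun d β J h b m (σ ⟨⟨m, Nat.lt_succ_self m⟩, w⟩) := by
  unfold isingZ
  rw [← Equiv.sum_comp (joinEquiv d m)
    (fun τ => Real.exp (isingExponent d β J h b (m + 1) τ)), Fintype.sum_prod_type]
  exact Finset.sum_congr rfl fun σ _ => sum_exp_join' d β J h b m σ

lemma sum_mu_join (d : ℕ) (β J : ℝ) (h b : ℕ → ℝ) (m : ℕ) (σ : CayleyConf d (m + 1)) :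
    ∑ ω : (Fin (m + 2) → Fin d) → Bool,
        isingMu d β J h b (m + 1) (joinConf d m σ ω)
      = Real.exp (isingExponent d β J h b m σ)
          * (∏ w : Fin (m + 1) → Fin d, gfun d β J h b m (σ ⟨⟨m, Nat.lt_succ_self m⟩, w⟩))
          / isingZ d β J h b (m + 1) := by
  unfold isingMu
  rw [← Finset.sum_div, sum_exp_join' d β J h b m σ]

lemma compat_iff_g (d : ℕ) (hd : 1 ≤ d) (β J : ℝ) (h b : ℕ → ℝ) (m : ℕ) :
    (∀ σ : CayleyConf d (m + 1),
        ∑ ω : (Fin (m + 2) → Fin d) → Bool,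
          isingMu d β J h b (m + 1) (joinConf d m σ ω) = isingMu d β J h b m σ)
      ↔ gfun d β J h b m true = gfun d β J h b m false := by
  have hdpos : 0 < d := hd
  have hZ := isingZ_pos d β J h b m
  have hZ' := isingZ_pos d β J h b (m + 1)
  have hNpos : 0 < Fintype.card (Fin (m + 1) → Fin d) :=
    Fintype.card_pos_iff.mpr ⟨fun _ => ⟨0, hdpos⟩⟩
  constructor
  · intro hc
    have key : ∀ s : Bool,
        gfun d β J h b m s ^ Fintype.card (Fin (m + 1) → Fin d)
          = isingZ d β J h b (m + 1) / isingZ d β J h b m := by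
      intro s
      have h1 := hc (fun _ => s)
      rw [sum_mu_join] at h1
      unfold isingMu at h1
      have h2 : (∏ w : Fin (m + 1) → Fin d, gfun d β J h b m s)
          = isingZ d β J h b (m + 1) / isingZ d β J h b m := by
        have hexp := Real.exp_pos (isingExponent d β J h b m (fun _ => s))
        rw [div_eq_div_iff hZ'.ne' hZ.ne'] at h1
        rw [eq_div_iff hZ.ne']
        have := mul_left_cancel₀ hexp.ne' (by linarith [h1] : Real.exp _ *
          ((∏ w : Fin (m + 1) → Fin d, gfun d β J h b m s) * isingZ d β J h b m)
            = Real.exp _ * isingZ d β J h b (m + 1))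
        exact this
      rw [← h2, Finset.prod_const, Finset.card_univ]
    have ht := key true
    have hf := key false
    have hg : gfun d β J h b m true ^ Fintype.card (Fin (m + 1) → Fin d)
        = gfun d β J h b m false ^ Fintype.card (Fin (m + 1) → Fin d) := by rw [ht, hf]
    exact (pow_left_strictMonoOn₀ hNpos.ne').injOn
      (gfun_pos d β J h b m true).le (gfun_pos d β J h b m false).le hg
  · intro hg σ
    have hconst : ∀ s : Bool, gfun d β J h b m s = gfun d β J h b m true := by
      intro s; cases s
      · exact hg.symm
      · rfl
    have hG : ∀ τ : CayleyConf d (m + 1),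
        (∏ w : Fin (m + 1) → Fin d, gfun d β J h b m (τ ⟨⟨m, Nat.lt_succ_self m⟩, w⟩))
          = gfun d β J h b m true ^ Fintype.card (Fin (m + 1) → Fin d) := by
      intro τ
      rw [← Finset.card_univ, ← Finset.prod_const]
      exact Finset.prod_congr rfl fun w _ => hconst _
    have hZeq : isingZ d β J h b (m + 1)
        = gfun d β J h b m true ^ Fintype.card (Fin (m + 1) → Fin d) * isingZ d β J h b m := by
      rw [Z_succ]
      unfold isingZ
      rw [Finset.mul_sum]
      exact Finset.sum_congr rfl fun τ _ => by rw [hG τ]; ring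
    rw [sum_mu_join, hG σ, hZeq]
    unfold isingMu
    have hc : (0:ℝ) < gfun d β J h b m true ^ Fintype.card (Fin (m + 1) → Fin d) :=
      pow_pos (gfun_pos d β J h b m true) _
    rw [mul_comm (gfun d β J h b m true ^ Fintype.card (Fin (m + 1) → Fin d))
      (isingZ d β J h b m)]
    rw [mul_div_mul_right _ _ hc.ne']

lemma g_iff (d : ℕ) (β J : ℝ) (h b : ℕ → ℝ) (m : ℕ) :
    gfun d β J h b m true = gfun d β J h b m false
      ↔ b (m + 1) = h (m + 1)
          + d * arctanh (Real.tanh (β * J) * Real.tanh (b (m + 2))) := by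
  have := scalar_iff d (β * J) (h (m + 1)) (b (m + 1)) (b (m + 2))
  unfold gfun
  simp only [spin, if_true, if_false, Bool.false_eq_true, mul_one, mul_neg_one, neg_sub]
  exact this

/-- the compatibility theorem: the family `(μ_n)_{n ≥ 1}` is compatible
(for every `n ≥ 2`, summing `μ_n(σ ∨ ω)` over the configurations `ω` on generation `n`
gives `μ_{n-1}(σ)`) if and only if the boundary fields satisfy the recurrence
`b_{n-1} = h_{n-1} + d·arctanh(θ·tanh b_n)` for every `n ≥ 2`, where `θ = tanh(βJ)`. -/
theorem compatibility_iff_boundary_recurrence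
    (d : ℕ) (hd : 2 ≤ d) (β J θ : ℝ) (hβ : 0 < β) (hJ : 0 < J)
    (hθ : θ = Real.tanh (β * J)) (h b : ℕ → ℝ) :
    (∀ m : ℕ, ∀ σ : CayleyConf d (m + 1),
        ∑ ω : (Fin (m + 2) → Fin d) → Bool,
          isingMu d β J h b (m + 1) (joinConf d m σ ω) = isingMu d β J h b m σ)
    ↔ ∀ n : ℕ, 2 ≤ n → b (n - 1) = h (n - 1) + d * arctanh (θ * Real.tanh (b n)) := by
  constructor
  · intro hc n hn
    obtain ⟨m, rfl⟩ : ∃ m, n = m + 2 := ⟨n - 2, by omega⟩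
    have hg := (compat_iff_g d (by omega) β J h b m).mp (hc m)
    have hrec := (g_iff d β J h b m).mp hg
    rw [hθ]
    simpa using hrec
  · intro hr m σ
    have hrec := hr (m + 2) (by omega)
    rw [hθ] at hrec
    refine (compat_iff_g d (by omega) β J h b m).mpr ?_ σ
    rw [g_iff d β J h b m]
    simpa using hrec
end

section
/- For any positive decreasing real sequence (ε_n)_{n≥1} and any n ≥ 1, Σ_{i=1}^n (i·ε_i)² ≤ Σ_{j=1}^n ( Σ_{i=j}^n ε_i )² ≤ Σ_{i=1}^n ((n-i+1)·ε_i)². -/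
lemma oddsum_nat (i : ℕ) : ∑ j ∈ Finset.Icc 1 i, (2 * (i - j) + 1) = i ^ 2 := by
  rw [← Finset.Ico_add_one_right_eq_Icc, Finset.sum_Ico_eq_sum_range]
  have h1 : ∀ k ∈ Finset.range (i + 1 - 1), 2 * (i - (1 + k)) + 1 = 2 * (i - 1 - k) + 1 := by
    intro k _; omega
  rw [Finset.sum_congr rfl h1]
  simp only [Nat.add_sub_cancel]
  rw [Finset.sum_range_reflect (fun k => 2 * k + 1) i]
  clear h1
  induction i with
  | zero => simp
  | succ m ih => rw [Finset.sum_range_succ, ih]; ring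

/-- for a positive decreasing sequence `(ε_n)_{n≥1}`,
`Σ_{i=1}^n (i ε_i)² ≤ Σ_{j=1}^n (Σ_{i=j}^n ε_i)² ≤ Σ_{i=1}^n ((n-i+1) ε_i)²`. -/
theorem rearrangement_bounds (ε : ℕ → ℝ)
    (hpos : ∀ n, 1 ≤ n → 0 < ε n)
    (hdec : ∀ n, 1 ≤ n → ε (n + 1) ≤ ε n)
    (n : ℕ) (hn : 1 ≤ n) :
    (∑ i ∈ Finset.Icc 1 n, ((i : ℝ) * ε i) ^ 2
        ≤ ∑ j ∈ Finset.Icc 1 n, (∑ i ∈ Finset.Icc j n, ε i) ^ 2) ∧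
    (∑ j ∈ Finset.Icc 1 n, (∑ i ∈ Finset.Icc j n, ε i) ^ 2
        ≤ ∑ i ∈ Finset.Icc 1 n, (((n : ℝ) - (i : ℝ) + 1) * ε i) ^ 2) := by
  have hanti : ∀ a b : ℕ, 1 ≤ a → a ≤ b → ε b ≤ ε a := by
    intro a b ha hab
    induction b, hab using Nat.le_induction with
    | base => exact le_refl _
    | succ m hm ih => exact (hdec m (ha.trans hm)).trans ih
  have hnn : ∀ i, 1 ≤ i → 0 ≤ ε i := fun i hi => (hpos i hi).le
  constructor
  · -- lower bound
    have key : ∀ j, 1 ≤ j → ∀ m, j ≤ m →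
        ∑ i ∈ Finset.Icc j m, ((2 * (i - j) + 1 : ℕ) : ℝ) * ε i ^ 2
          ≤ (∑ i ∈ Finset.Icc j m, ε i) ^ 2 := by
      intro j hj m hm
      induction m, hm using Nat.le_induction with
      | base => simp [Finset.Icc_self]
      | succ m hm ih =>
        rw [Finset.sum_Icc_succ_top (by omega : j ≤ m + 1),
            Finset.sum_Icc_succ_top (by omega : j ≤ m + 1)]
        have hS : ((m + 1 - j : ℕ) : ℝ) * ε (m + 1) ≤ ∑ i ∈ Finset.Icc j m, ε i := by
          have h2 : ∑ _i ∈ Finset.Icc j m, ε (m + 1) ≤ ∑ i ∈ Finset.Icc j m, ε i :=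
            Finset.sum_le_sum fun i hi =>
              hanti i (m + 1) (hj.trans (Finset.mem_Icc.mp hi).1)
                (by have := (Finset.mem_Icc.mp hi).2; omega)
          have hc : (Finset.Icc j m).card = m + 1 - j := Nat.card_Icc j m
          calc ((m + 1 - j : ℕ) : ℝ) * ε (m + 1)
              = ∑ _i ∈ Finset.Icc j m, ε (m + 1) := by
                rw [Finset.sum_const, hc, nsmul_eq_mul]
            _ ≤ _ := h2
        have hε : 0 ≤ ε (m + 1) := hnn (m + 1) (by omega)
        have hS' := mul_le_mul_of_nonneg_right hS hε
        have hcast : ((2 * (m + 1 - j) + 1 : ℕ) : ℝ)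
            = 2 * ((m + 1 - j : ℕ) : ℝ) + 1 := by push_cast; ring
        rw [hcast]
        nlinarith [ih]
    calc ∑ i ∈ Finset.Icc 1 n, ((i : ℝ) * ε i) ^ 2
        = ∑ i ∈ Finset.Icc 1 n, ∑ j ∈ Finset.Icc 1 i,
            ((2 * (i - j) + 1 : ℕ) : ℝ) * ε i ^ 2 := by
          refine Finset.sum_congr rfl fun i hi => ?_
          rw [← Finset.sum_mul, ← Nat.cast_sum, oddsum_nat i]
          push_cast
          ring
      _ = ∑ j ∈ Finset.Icc 1 n, ∑ i ∈ Finset.Icc j n,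
            ((2 * (i - j) + 1 : ℕ) : ℝ) * ε i ^ 2 := by
          exact Finset.sum_comm' fun x y => by simp only [Finset.mem_Icc]; omega
      _ ≤ _ := Finset.sum_le_sum fun j hj =>
          key j (Finset.mem_Icc.mp hj).1 n (Finset.mem_Icc.mp hj).2
  · -- upper bound
    refine Finset.sum_le_sum fun j hj => ?_
    obtain ⟨hj1, hjn⟩ := Finset.mem_Icc.mp hj
    have hSnn : 0 ≤ ∑ i ∈ Finset.Icc j n, ε i :=
      Finset.sum_nonneg fun i hi => hnn i (hj1.trans (Finset.mem_Icc.mp hi).1)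
    have hle : ∑ i ∈ Finset.Icc j n, ε i ≤ ((n : ℝ) - (j : ℝ) + 1) * ε j := by
      have h2 : ∑ i ∈ Finset.Icc j n, ε i ≤ ∑ _i ∈ Finset.Icc j n, ε j :=
        Finset.sum_le_sum fun i hi => hanti j i hj1 (Finset.mem_Icc.mp hi).1
      have hc : (Finset.Icc j n).card = n + 1 - j := Nat.card_Icc j n
      calc ∑ i ∈ Finset.Icc j n, ε i ≤ ∑ _i ∈ Finset.Icc j n, ε j := h2
        _ = ((n + 1 - j : ℕ) : ℝ) * ε j := by rw [Finset.sum_const, hc, nsmul_eq_mul]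
        _ = ((n : ℝ) - (j : ℝ) + 1) * ε j := by
            congr 1
            rw [Nat.cast_sub (by omega)]
            push_cast; ring
    exact pow_le_pow_left₀ hSnn hle 2
end

section
/- Let d ≥ 2 be an integer and let (ε_n)_{n≥1} be a positive decreasing real sequence such that Σ_{n≥1} d^n·ε_n < ∞. Then sup_{n≥1} Σ_{j=1}^n ( Σ_{i=j}^n ε_i )² < ∞, i.e., the sequence n ↦ Σ_{j=1}^n ( Σ_{i=j}^n ε_i )² converges to a finite limit. -/
private lemma geom_range_le_two {r : ℝ} (hr0 : 0 ≤ r) (hr : r ≤ 1/2) (m : ℕ) :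
    ∑ k ∈ Finset.range m, r ^ k ≤ 2 - 2 * r ^ m := by
  induction m with
  | zero => simp
  | succ m ih =>
    rw [Finset.sum_range_succ, pow_succ]
    have hm : 0 ≤ r ^ m := pow_nonneg hr0 m
    nlinarith [mul_le_mul_of_nonneg_left hr hm]

private lemma geom_Icc_le {r : ℝ} (hr0 : 0 ≤ r) (hr : r ≤ 1/2) (j n : ℕ) :
    ∑ i ∈ Finset.Icc j n, r ^ i ≤ 2 * r ^ j := by
  rw [← Finset.Ico_add_one_right_eq_Icc, Finset.sum_Ico_eq_sum_range]
  have : ∀ k ∈ Finset.range (n + 1 - j), r ^ (j + k) = r ^ j * r ^ k := by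
    intro k _; rw [pow_add]
  rw [Finset.sum_congr rfl this, ← Finset.mul_sum]
  have h2 : ∑ k ∈ Finset.range (n + 1 - j), r ^ k ≤ 2 :=
    (geom_range_le_two hr0 hr (n + 1 - j)).trans (by nlinarith [pow_nonneg hr0 (n + 1 - j)])
  calc r ^ j * ∑ k ∈ Finset.range (n + 1 - j), r ^ k ≤ r ^ j * 2 :=
        mul_le_mul_of_nonneg_left h2 (pow_nonneg hr0 j)
    _ = 2 * r ^ j := mul_comm _ _

/-- if `d ≥ 2` and `(ε_n)_{n≥1}` is positive, decreasing and satisfies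
`Σ_{n≥1} dⁿ ε_n < ∞`, then `n ↦ Σ_{j=1}^n (Σ_{i=j}^n ε_i)²` converges to a finite limit. -/
theorem summable_geom_implies_condition (d : ℕ) (hd : 2 ≤ d) (ε : ℕ → ℝ)
    (hpos : ∀ n, 1 ≤ n → 0 < ε n)
    (hdec : ∀ n, 1 ≤ n → ε (n + 1) ≤ ε n)
    (hsum : Summable fun n : ℕ => (d : ℝ) ^ n * ε n) :
    ∃ L : ℝ, Filter.Tendsto
      (fun n : ℕ => ∑ j ∈ Finset.Icc 1 n, (∑ i ∈ Finset.Icc j n, ε i) ^ 2)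
      Filter.atTop (nhds L) := by
  set a : ℕ → ℝ := fun n => ∑ j ∈ Finset.Icc 1 n, (∑ i ∈ Finset.Icc j n, ε i) ^ 2 with ha
  have hεnn : ∀ i, 1 ≤ i → 0 ≤ ε i := fun i hi => (hpos i hi).le
  have hinn : ∀ j n, 1 ≤ j → 0 ≤ ∑ i ∈ Finset.Icc j n, ε i := by
    intro j n hj
    exact Finset.sum_nonneg fun i hi => hεnn i (hj.trans (Finset.mem_Icc.mp hi).1)
  -- monotonicity
  have hmono : Monotone a := by
    apply monotone_nat_of_le_succ
    intro n
    have h1 : a n ≤ ∑ j ∈ Finset.Icc 1 n, (∑ i ∈ Finset.Icc j (n + 1), ε i) ^ 2 := by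
      apply Finset.sum_le_sum
      intro j hj
      have hj1 : 1 ≤ j := (Finset.mem_Icc.mp hj).1
      have hsub : Finset.Icc j n ⊆ Finset.Icc j (n + 1) :=
        Finset.Icc_subset_Icc_right (Nat.le_succ n)
      have : ∑ i ∈ Finset.Icc j n, ε i ≤ ∑ i ∈ Finset.Icc j (n + 1), ε i := by
        apply Finset.sum_le_sum_of_subset_of_nonneg hsub
        intro i hi _
        exact hεnn i (hj1.trans (Finset.mem_Icc.mp hi).1)
      exact pow_le_pow_left₀ (hinn j n hj1) this 2
    refine h1.trans ?_
    apply Finset.sum_le_sum_of_subset_of_nonneg (Finset.Icc_subset_Icc_right (Nat.le_succ n))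
    intro j hj _
    exact sq_nonneg _
  -- boundedness
  have hd1 : (1 : ℝ) < d := by exact_mod_cast Nat.lt_of_lt_of_le one_lt_two hd
  have hd0 : (0 : ℝ) < d := lt_trans zero_lt_one hd1
  set r : ℝ := 1 / d with hrdef
  have hr0 : 0 ≤ r := by positivity
  have hr : r ≤ 1 / 2 := by
    rw [hrdef]
    apply div_le_div_of_nonneg_left zero_le_one (by norm_num)
    exact_mod_cast hd
  obtain ⟨M, hM⟩ := hsum.tendsto_atTop_zero.bddAbove_range
  have hM' : ∀ n, (d : ℝ) ^ n * ε n ≤ M := fun n => hM ⟨n, rfl⟩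
  have hM0 : 0 ≤ M := by
    have := hM' 1
    have h1 : 0 < (d : ℝ) ^ 1 * ε 1 := mul_pos (by positivity) (hpos 1 le_rfl)
    linarith
  have hε_le : ∀ n, 1 ≤ n → ε n ≤ M * r ^ n := by
    intro n _
    have := hM' n
    have hdn : (0 : ℝ) < (d : ℝ) ^ n := by positivity
    rw [hrdef, div_pow, one_pow, mul_div_assoc' ]
    rw [le_div_iff₀ hdn, mul_comm]
    linarith
  have hbdd : BddAbove (Set.range a) := by
    refine ⟨8 * M ^ 2, ?_⟩
    rintro x ⟨n, rfl⟩
    have hinner : ∀ j, 1 ≤ j → ∑ i ∈ Finset.Icc j n, ε i ≤ 2 * M * r ^ j := by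
      intro j hj
      calc ∑ i ∈ Finset.Icc j n, ε i ≤ ∑ i ∈ Finset.Icc j n, M * r ^ i := by
            apply Finset.sum_le_sum
            intro i hi
            exact hε_le i (hj.trans (Finset.mem_Icc.mp hi).1)
        _ = M * ∑ i ∈ Finset.Icc j n, r ^ i := by rw [Finset.mul_sum]
        _ ≤ M * (2 * r ^ j) := mul_le_mul_of_nonneg_left (geom_Icc_le hr0 hr j n) hM0
        _ = 2 * M * r ^ j := by ring
    have hsq : ∀ j ∈ Finset.Icc 1 n, (∑ i ∈ Finset.Icc j n, ε i) ^ 2 ≤ 4 * M ^ 2 * (r ^ 2) ^ j := by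
      intro j hj
      have hj1 : 1 ≤ j := (Finset.mem_Icc.mp hj).1
      have h1 := hinner j hj1
      have h2 := hinn j n hj1
      have : (∑ i ∈ Finset.Icc j n, ε i) ^ 2 ≤ (2 * M * r ^ j) ^ 2 := pow_le_pow_left₀ h2 h1 2
      calc (∑ i ∈ Finset.Icc j n, ε i) ^ 2 ≤ (2 * M * r ^ j) ^ 2 := this
        _ = 4 * M ^ 2 * (r ^ 2) ^ j := by ring
    have hr2 : r ^ 2 ≤ 1 / 2 := by nlinarith
    have hr20 : 0 ≤ r ^ 2 := sq_nonneg r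
    calc a n ≤ ∑ j ∈ Finset.Icc 1 n, 4 * M ^ 2 * (r ^ 2) ^ j := Finset.sum_le_sum hsq
      _ ≤ ∑ j ∈ Finset.range (n + 1), 4 * M ^ 2 * (r ^ 2) ^ j := by
          apply Finset.sum_le_sum_of_subset_of_nonneg
          · intro j hj
            rw [Finset.mem_range]
            exact Nat.lt_succ_of_le (Finset.mem_Icc.mp hj).2
          · intro j _ _; positivity
      _ = 4 * M ^ 2 * ∑ j ∈ Finset.range (n + 1), (r ^ 2) ^ j := by rw [Finset.mul_sum]
      _ ≤ 4 * M ^ 2 * 2 := by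
          apply mul_le_mul_of_nonneg_left _ (by positivity)
          exact (geom_range_le_two hr20 hr2 (n + 1)).trans
            (by nlinarith [pow_nonneg hr20 (n + 1)])
      _ = 8 * M ^ 2 := by ring
  exact ⟨⨆ n, a n, tendsto_atTop_ciSup hmono hbdd⟩
end

section
/- Let γ > 0 and set ε_k = k^{-γ} for k ≥ 1. Then the sequence n ↦ Σ_{j=1}^n ( Σ_{i=j}^n i^{-γ} )² is bounded (equivalently, converges to a finite limit) if and only if γ > 3/2. In particular, at the critical power γ = 3/2 the sequence tends to infinity. -/
open Finset Filter Real

lemma plce_bern {γ : ℝ} (hγ : 1 < γ) {x : ℝ} (hx : 1 ≤ x) :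
    (γ - 1) * (x + 1) ^ (-γ) ≤ x ^ (1 - γ) - (x + 1) ^ (1 - γ) := by
  have hx0 : (0:ℝ) < x := lt_of_lt_of_le one_pos hx
  have hx1 : (0:ℝ) < x + 1 := by linarith
  have ha : (0:ℝ) < x ^ γ := Real.rpow_pos_of_pos hx0 _
  have hb : (0:ℝ) < (x + 1) ^ γ := Real.rpow_pos_of_pos hx1 _
  have hs : (-1:ℝ) ≤ 1 / x := by
    have : (0:ℝ) ≤ 1 / x := by positivity
    linarith
  have hB : 1 + γ * (1 / x) ≤ (1 + 1 / x) ^ γ :=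
    one_add_mul_self_le_rpow_one_add hs hγ.le
  have h1 : (1 : ℝ) + 1 / x = (x + 1) / x := by field_simp
  rw [h1, Real.div_rpow (by linarith) hx0.le] at hB
  have e1 : x ^ (1 - γ) = x / x ^ γ := by
    rw [Real.rpow_sub hx0, Real.rpow_one]
  have e2 : (x + 1) ^ (1 - γ) = (x + 1) / (x + 1) ^ γ := by
    rw [Real.rpow_sub hx1, Real.rpow_one]
  have e3 : (x + 1) ^ (-γ) = 1 / (x + 1) ^ γ := by
    rw [Real.rpow_neg hx1.le, one_div]
  rw [e1, e2, e3]
  have hmul : (x + γ) * x ^ γ ≤ x * (x + 1) ^ γ := by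
    have h2 := mul_le_mul_of_nonneg_right hB (mul_pos hx0 ha).le
    calc (x + γ) * x ^ γ = (1 + γ * (1 / x)) * (x * x ^ γ) := by field_simp
      _ ≤ (x + 1) ^ γ / x ^ γ * (x * x ^ γ) := h2
      _ = x * (x + 1) ^ γ := by field_simp
  rw [mul_one_div, div_sub_div _ _ ha.ne' hb.ne', div_le_div_iff₀ hb (mul_pos ha hb)]
  nlinarith [mul_le_mul_of_nonneg_right hmul hb.le, hb.le, ha.le]

lemma plce_tail {γ : ℝ} (hγ : 1 < γ) {j : ℕ} (hj : 1 ≤ j) (n : ℕ) :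
    ∑ i ∈ Finset.Icc j n, (i : ℝ) ^ (-γ) ≤ γ / (γ - 1) * (j : ℝ) ^ (1 - γ) := by
  have hj0 : (0:ℝ) < (j:ℝ) := by exact_mod_cast hj
  have hj1 : (1:ℝ) ≤ (j:ℝ) := by exact_mod_cast hj
  have hγ0 : (0:ℝ) < γ - 1 := by linarith
  rcases lt_or_ge n j with h | h
  · rw [Finset.Icc_eq_empty (by omega)]
    simp only [Finset.sum_empty]
    positivity
  have key : ∀ m : ℕ, j ≤ m →
      ∑ i ∈ Finset.Icc j m, (i : ℝ) ^ (-γ) ≤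
        (j : ℝ) ^ (-γ) + ((j : ℝ) ^ (1 - γ) - (m : ℝ) ^ (1 - γ)) / (γ - 1) := by
    intro m hm
    induction m, hm using Nat.le_induction with
    | base => simp
    | succ m hm ih =>
      rw [Finset.sum_Icc_succ_top (by omega)]
      have hx : (1:ℝ) ≤ (m:ℝ) := by exact_mod_cast le_trans hj hm
      have hstep : ((m:ℝ) + 1) ^ (-γ) ≤
          ((m : ℝ) ^ (1 - γ) - ((m:ℝ) + 1) ^ (1 - γ)) / (γ - 1) :=
        (le_div_iff₀' hγ0).mpr (plce_bern hγ hx)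
      have hsplit : ((j:ℝ) ^ (1-γ) - ((m:ℝ)+1) ^ (1-γ)) / (γ - 1)
          = ((j:ℝ) ^ (1-γ) - (m:ℝ) ^ (1-γ)) / (γ - 1)
            + ((m:ℝ) ^ (1-γ) - ((m:ℝ)+1) ^ (1-γ)) / (γ - 1) := by ring
      push_cast
      push_cast at ih
      rw [hsplit]
      linarith
  have h2 := key n h
  have h3 : (0:ℝ) ≤ (n:ℝ) ^ (1 - γ) := Real.rpow_nonneg (by positivity) _
  have h4 : (j:ℝ) ^ (-γ) ≤ (j:ℝ) ^ (1 - γ) :=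
    Real.rpow_le_rpow_of_exponent_le hj1 (by linarith)
  have h6 : ((j:ℝ) ^ (1-γ) - (n:ℝ) ^ (1-γ)) / (γ - 1) ≤ (j:ℝ) ^ (1-γ) / (γ - 1) := by
    gcongr
    linarith
  have h5 : γ / (γ - 1) * (j : ℝ) ^ (1 - γ)
      = (j:ℝ) ^ (1-γ) + (j:ℝ) ^ (1-γ) / (γ - 1) := by
    field_simp
    ring
  rw [h5]
  linarith

lemma plce_low {γ : ℝ} (hγ : 0 < γ) (hγ' : γ ≤ 3/2) {j n : ℕ} (hj : 1 ≤ j)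
    (hn : 2 * j ≤ n) :
    1 / (8 * (j:ℝ)) ≤ (∑ i ∈ Finset.Icc j n, (i : ℝ) ^ (-γ)) ^ 2 := by
  have hj0 : (0:ℝ) < (j:ℝ) := by exact_mod_cast hj
  have h2j : (0:ℝ) < ((2*j : ℕ):ℝ) := by positivity
  have hbase : (1:ℝ) ≤ ((2*j : ℕ):ℝ) := by exact_mod_cast Nat.one_le_iff_ne_zero.mpr (by omega)
  -- each term on Icc j (2j) is at least (2j)^(-γ)
  have hterm : ∀ i ∈ Finset.Icc j (2*j), ((2*j : ℕ):ℝ) ^ (-γ) ≤ (i:ℝ) ^ (-γ) := by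
    intro i hi
    rw [Finset.mem_Icc] at hi
    exact Real.rpow_le_rpow_of_nonpos (by exact_mod_cast lt_of_lt_of_le hj hi.1)
      (by exact_mod_cast hi.2) (by linarith)
  have hcard := Finset.card_nsmul_le_sum (Finset.Icc j (2*j)) _ _ hterm
  rw [Nat.card_Icc] at hcard
  have hc : (2*j + 1 - j) = j + 1 := by omega
  rw [hc, nsmul_eq_mul] at hcard
  have hsub : ∑ i ∈ Finset.Icc j (2*j), (i:ℝ) ^ (-γ) ≤ ∑ i ∈ Finset.Icc j n, (i:ℝ) ^ (-γ) := by
    apply Finset.sum_le_sum_of_subset_of_nonneg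
    · exact Finset.Icc_subset_Icc_right hn
    · intro i _ _; positivity
  have hT : (j:ℝ) * ((2*j : ℕ):ℝ) ^ (-γ) ≤ ∑ i ∈ Finset.Icc j n, (i:ℝ) ^ (-γ) := by
    have : (j:ℝ) * ((2*j : ℕ):ℝ) ^ (-γ) ≤ ((j:ℝ) + 1) * ((2*j : ℕ):ℝ) ^ (-γ) := by
      have : (0:ℝ) ≤ ((2*j : ℕ):ℝ) ^ (-γ) := by positivity
      nlinarith
    calc (j:ℝ) * ((2*j : ℕ):ℝ) ^ (-γ) ≤ ((j:ℝ) + 1) * ((2*j : ℕ):ℝ) ^ (-γ) := this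
      _ = (((j+1 : ℕ)):ℝ) * ((2*j : ℕ):ℝ) ^ (-γ) := by push_cast; ring
      _ ≤ ∑ i ∈ Finset.Icc j (2*j), (i:ℝ) ^ (-γ) := hcard
      _ ≤ _ := hsub
  have hTpos : (0:ℝ) ≤ (j:ℝ) * ((2*j : ℕ):ℝ) ^ (-γ) := by positivity
  have hsq : ((j:ℝ) * ((2*j : ℕ):ℝ) ^ (-γ)) ^ 2 ≤ (∑ i ∈ Finset.Icc j n, (i:ℝ) ^ (-γ)) ^ 2 :=
    pow_le_pow_left₀ hTpos hT 2
  refine le_trans ?_ hsq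
  -- (j * (2j)^(-γ))² = j² * (2j)^(-2γ) ≥ j² * (2j)^(-3) = 1/(8j)
  have e1 : ((j:ℝ) * ((2*j : ℕ):ℝ) ^ (-γ)) ^ 2
      = (j:ℝ)^2 * ((2*j : ℕ):ℝ) ^ (-γ + -γ) := by
    rw [Real.rpow_add h2j]; ring
  rw [e1]
  have e2 : ((2*j : ℕ):ℝ) ^ ((-3 : ℝ)) ≤ ((2*j : ℕ):ℝ) ^ (-γ + -γ) :=
    Real.rpow_le_rpow_of_exponent_le hbase (by linarith)
  have e3 : ((2*j : ℕ):ℝ) ^ ((-3:ℝ)) = (8 * (j:ℝ)^3)⁻¹ := by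
    rw [show ((-3:ℝ)) = -((3:ℕ):ℝ) by norm_num, Real.rpow_neg h2j.le, Real.rpow_natCast]
    push_cast
    ring_nf
  have : (j:ℝ)^2 * ((2*j : ℕ):ℝ) ^ ((-3:ℝ)) ≤ (j:ℝ)^2 * ((2*j : ℕ):ℝ) ^ (-γ + -γ) := by
    apply mul_le_mul_of_nonneg_left e2 (by positivity)
  refine le_trans ?_ this
  rw [e3]
  have heq : (j:ℝ)^2 * (8 * (j:ℝ)^3)⁻¹ = 1/(8*(j:ℝ)) := by
    field_simp
  rw [heq]

lemma plce_S_low {γ : ℝ} (hγ : 0 < γ) (hγ' : γ ≤ 3/2) (n : ℕ) :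
    (1/8) * ∑ i ∈ Finset.range (n/2), (1/((i:ℝ)+1)) ≤
      ∑ j ∈ Finset.Icc 1 n, (∑ i ∈ Finset.Icc j n, (i : ℝ) ^ (-γ)) ^ 2 := by
  have h1 : ∑ j ∈ Finset.Icc 1 (n/2), (∑ i ∈ Finset.Icc j n, (i : ℝ) ^ (-γ)) ^ 2 ≤
      ∑ j ∈ Finset.Icc 1 n, (∑ i ∈ Finset.Icc j n, (i : ℝ) ^ (-γ)) ^ 2 := by
    apply Finset.sum_le_sum_of_subset_of_nonneg
    · exact Finset.Icc_subset_Icc_right (Nat.div_le_self n 2)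
    · intro i _ _; positivity
  refine le_trans ?_ h1
  have h2 : ∀ j ∈ Finset.Icc 1 (n/2),
      1 / (8 * (j:ℝ)) ≤ (∑ i ∈ Finset.Icc j n, (i : ℝ) ^ (-γ)) ^ 2 := by
    intro j hj
    rw [Finset.mem_Icc] at hj
    exact plce_low hγ hγ' hj.1 (by
      have := hj.2
      omega)
  refine le_trans ?_ (Finset.sum_le_sum h2)
  rw [← Finset.Ico_add_one_right_eq_Icc, Finset.sum_Ico_eq_sum_range, Finset.mul_sum]
  have hc : n/2 + 1 - 1 = n/2 := by omega
  rw [hc]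
  apply le_of_eq
  apply Finset.sum_congr rfl
  intro i _
  push_cast
  field_simp
  ring

/-- for `ε_k = k^{-γ}` (`γ > 0`), the sequence
`n ↦ Σ_{j=1}^n (Σ_{i=j}^n i^{-γ})²` is bounded iff `γ > 3/2`;
in particular at the critical power `γ = 3/2` it tends to infinity. -/
theorem power_law_critical_exponent (γ : ℝ) (hγ : 0 < γ) :
    (BddAbove (Set.range fun n : ℕ =>
        ∑ j ∈ Finset.Icc 1 n, (∑ i ∈ Finset.Icc j n, (i : ℝ) ^ (-γ)) ^ 2)
      ↔ 3 / 2 < γ) ∧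
    (γ = 3 / 2 → Filter.Tendsto
      (fun n : ℕ => ∑ j ∈ Finset.Icc 1 n, (∑ i ∈ Finset.Icc j n, (i : ℝ) ^ (-γ)) ^ 2)
      Filter.atTop Filter.atTop) := by
  constructor
  · constructor
    · intro hbdd
      by_contra hle
      push_neg at hle
      obtain ⟨M, hM⟩ := hbdd
      have hH := Real.tendsto_sum_range_one_div_nat_succ_atTop
      obtain ⟨m, hm⟩ := (hH.eventually_gt_atTop (8*M)).exists
      have hlow := plce_S_low hγ hle (2*m)
      have hdiv : (2*m)/2 = m := by omega
      rw [hdiv] at hlow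
      have hub : (∑ j ∈ Finset.Icc 1 (2*m), (∑ i ∈ Finset.Icc j (2*m), (i:ℝ) ^ (-γ)) ^ 2) ≤ M :=
        hM ⟨2*m, rfl⟩
      linarith
    · intro hγ2
      have hγ1 : (1:ℝ) < γ := by linarith
      have hC : (0:ℝ) ≤ γ / (γ - 1) := by
        apply div_nonneg <;> linarith
      have hsum : Summable (fun j : ℕ => (γ/(γ-1))^2 * (j:ℝ) ^ (2 - 2*γ)) :=
        (Real.summable_nat_rpow.mpr (by linarith)).mul_left _
      refine ⟨∑' j : ℕ, (γ/(γ-1))^2 * (j:ℝ) ^ (2 - 2*γ), ?_⟩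
      rintro y ⟨n, rfl⟩
      refine le_trans ?_ (Summable.sum_le_tsum (Finset.Icc 1 n) (fun i _ => by positivity) hsum)
      apply Finset.sum_le_sum
      intro j hj
      rw [Finset.mem_Icc] at hj
      have hj0 : (0:ℝ) < (j:ℝ) := by exact_mod_cast hj.1
      have hT : ∑ i ∈ Finset.Icc j n, (i:ℝ) ^ (-γ) ≤ γ/(γ-1) * (j:ℝ) ^ (1-γ) :=
        plce_tail hγ1 hj.1 n
      have hTnn : (0:ℝ) ≤ ∑ i ∈ Finset.Icc j n, (i:ℝ) ^ (-γ) := by positivity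
      calc (∑ i ∈ Finset.Icc j n, (i:ℝ) ^ (-γ)) ^ 2
          ≤ (γ/(γ-1) * (j:ℝ) ^ (1-γ)) ^ 2 := pow_le_pow_left₀ hTnn hT 2
        _ = (γ/(γ-1))^2 * (j:ℝ) ^ (2 - 2*γ) := by
            rw [mul_pow, sq ((j:ℝ) ^ (1-γ)), ← Real.rpow_add hj0]
            ring_nf
  · intro h32
    have hle : γ ≤ 3/2 := le_of_eq h32
    apply Filter.tendsto_atTop_mono (plce_S_low hγ hle)
    have h1 : Filter.Tendsto (fun n : ℕ => n/2) Filter.atTop Filter.atTop :=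
      Filter.tendsto_atTop_atTop.mpr fun b => ⟨2*b, fun n hn => by omega⟩
    exact (Real.tendsto_sum_range_one_div_nat_succ_atTop.comp h1).const_mul_atTop (by norm_num)
end

section
/- Let d ≥ 2 be an integer, θ ∈ (0,1), h_c > 0, and suppose ψ(x) = -h_c + d·arctanh(θ·tanh x) has exactly two fixed points b⁻ < b⁺ with ψ'(b⁺) = 1 and ψ'(b⁻) < 1. Let (ε_n)_{n≥1} be a positive sequence decreasing to 0 such that Σ_{j=1}^n ( Σ_{i=j}^n ε_i )² → ∞ as n → ∞. With ψ̃_{k,n} the perturbed compositions (ψ̃_{n,n}(x) = ψ(x) - ε_n, ψ̃_{k,n}(x) = ψ(ψ̃_{k+1,n}(x)) - ε_k), for every k ≥ 1 and all real x, y, lim_{n→∞} ( ψ̃_{k,n}(x) - ψ̃_{k,n}(y) ) = 0. -/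
namespace PsiAux

lemma tanh_lt_one (x : ℝ) : Real.tanh x < 1 := by
  rw [Real.tanh_eq_sinh_div_cosh, div_lt_one (Real.cosh_pos x)]
  nlinarith [Real.cosh_sub_sinh x, Real.exp_pos (-x)]

lemma neg_one_lt_tanh (x : ℝ) : -1 < Real.tanh x := by
  rw [Real.tanh_eq_sinh_div_cosh, lt_div_iff₀ (Real.cosh_pos x)]
  nlinarith [Real.sinh_add_cosh x, Real.exp_pos x]

lemma tanh_sq_lt_one (x : ℝ) : Real.tanh x ^ 2 < 1 := by
  nlinarith [tanh_lt_one x, neg_one_lt_tanh x]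

lemma hasDerivAt_tanh (x : ℝ) : HasDerivAt Real.tanh (1 - Real.tanh x ^ 2) x := by
  have h := (Real.hasDerivAt_sinh x).div (Real.hasDerivAt_cosh x) (Real.cosh_pos x).ne'
  have hfun : (fun y => Real.sinh y / Real.cosh y) = Real.tanh := by
    funext y; rw [Real.tanh_eq_sinh_div_cosh]
  rw [show (Real.sinh / Real.cosh) = Real.tanh from hfun] at h
  refine h.congr_deriv (Eq.symm ?_)
  have hc := Real.cosh_sq_sub_sinh_sq x
  have hcp := (Real.cosh_pos x).ne'
  rw [Real.tanh_eq_sinh_div_cosh]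
  field_simp

lemma tanh_strictMono : StrictMono Real.tanh := by
  apply strictMono_of_deriv_pos
  intro x
  rw [(hasDerivAt_tanh x).deriv]
  nlinarith [tanh_sq_lt_one x]

lemma hasDerivAt_arctanh {u : ℝ} (h1 : -1 < u) (h2 : u < 1) :
    HasDerivAt arctanh (1 / (1 - u ^ 2)) u := by
  have h1p : (0:ℝ) < 1 + u := by linarith
  have h2p : (0:ℝ) < 1 - u := by linarith
  have hA : HasDerivAt (fun y : ℝ => 1 + y) 1 u := by
    simpa using (hasDerivAt_id u).const_add (1:ℝ)
  have hB : HasDerivAt (fun y : ℝ => 1 - y) (-1) u := by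
    simpa using (hasDerivAt_id u).const_sub (1:ℝ)
  have hlogA := hA.log h1p.ne'
  have hlogB := hB.log h2p.ne'
  have hd := ((hlogA.sub hlogB).const_mul ((1:ℝ)/2))
  have heq : (fun y : ℝ => (1/2) * (Real.log (1 + y) - Real.log (1 - y))) =ᶠ[nhds u] arctanh := by
    have : Set.Ioo (-1 : ℝ) 1 ∈ nhds u := isOpen_Ioo.mem_nhds ⟨h1, h2⟩
    filter_upwards [this] with y hy
    have : (0:ℝ) < 1 + y := by linarith [hy.1]
    have : (0:ℝ) < 1 - y := by linarith [hy.2]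
    unfold arctanh
    rw [Real.log_div (by linarith [hy.1] : (1:ℝ) + y ≠ 0) (by linarith [hy.2] : (1:ℝ) - y ≠ 0)]
  have := hd.congr_of_eventuallyEq heq.symm
  refine this.congr_deriv (Eq.symm ?_)
  have hne : (1:ℝ) - u ^ 2 ≠ 0 := by nlinarith
  field_simp
  ring

lemma arctanh_lt_arctanh {u v : ℝ} (h1 : -1 < u) (h : u < v) (h2 : v < 1) :
    arctanh u < arctanh v := by
  unfold arctanh
  have h1p : (0:ℝ) < 1 + u := by linarith
  have h2p : (0:ℝ) < 1 - u := by linarith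
  have h3p : (0:ℝ) < 1 + v := by linarith
  have h4p : (0:ℝ) < 1 - v := by linarith
  have hlt : (1 + u) / (1 - u) < (1 + v) / (1 - v) := by
    rw [div_lt_div_iff₀ h2p h4p]; nlinarith
  have := Real.log_lt_log (by positivity) hlt
  linarith

lemma arctanh_neg (u : ℝ) : arctanh (-u) = - arctanh u := by
  unfold arctanh
  rw [show (1 : ℝ) + -u = 1 - u by ring, show (1 : ℝ) - -u = 1 + u by ring,
    show (1 - u) / (1 + u) = ((1 + u) / (1 - u))⁻¹ by rw [inv_div], Real.log_inv]
  ring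

lemma arctanh_zero : arctanh 0 = 0 := by simp [arctanh]

noncomputable def Dfun (d : ℕ) (θ : ℝ) (x : ℝ) : ℝ :=
  (d : ℝ) * θ * (1 - Real.tanh x ^ 2) / (1 - θ ^ 2 * Real.tanh x ^ 2)

variable {d : ℕ} {θ hc : ℝ}

lemma denom_pos (hθ1 : 0 < θ) (hθ2 : θ < 1) (x : ℝ) :
    0 < 1 - θ ^ 2 * Real.tanh x ^ 2 := by
  nlinarith [tanh_sq_lt_one x, sq_nonneg (Real.tanh x), sq_nonneg θ]

lemma Dfun_pos (hd : 2 ≤ d) (hθ1 : 0 < θ) (hθ2 : θ < 1) (x : ℝ) : 0 < Dfun d θ x := by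
  have hd0 : (0:ℝ) < d := by exact_mod_cast Nat.lt_of_lt_of_le (by norm_num) hd
  exact div_pos (by nlinarith [tanh_sq_lt_one x, mul_pos hd0 hθ1]) (denom_pos hθ1 hθ2 x)

lemma Dfun_anti (hd : 2 ≤ d) (hθ1 : 0 < θ) (hθ2 : θ < 1) {x y : ℝ}
    (h : Real.tanh y ^ 2 ≤ Real.tanh x ^ 2) : Dfun d θ x ≤ Dfun d θ y := by
  have hd0 : (0:ℝ) < d := by exact_mod_cast Nat.lt_of_lt_of_le (by norm_num) hd
  rw [Dfun, Dfun, div_le_div_iff₀ (denom_pos hθ1 hθ2 x) (denom_pos hθ1 hθ2 y)]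
  nlinarith [mul_nonneg (mul_nonneg (mul_nonneg hd0.le hθ1.le)
    (by nlinarith : (0:ℝ) ≤ 1 - θ ^ 2)) (sub_nonneg.mpr h)]

lemma Dfun_lt (hd : 2 ≤ d) (hθ1 : 0 < θ) (hθ2 : θ < 1) {x y : ℝ}
    (h : Real.tanh y ^ 2 < Real.tanh x ^ 2) : Dfun d θ x < Dfun d θ y := by
  have hd0 : (0:ℝ) < d := by exact_mod_cast Nat.lt_of_lt_of_le (by norm_num) hd
  rw [Dfun, Dfun, div_lt_div_iff₀ (denom_pos hθ1 hθ2 x) (denom_pos hθ1 hθ2 y)]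
  nlinarith [mul_pos (mul_pos (mul_pos hd0 hθ1)
    (by nlinarith : (0:ℝ) < 1 - θ ^ 2)) (sub_pos.mpr h)]

lemma hasDerivAt_F (hθ1 : 0 < θ) (hθ2 : θ < 1) (x : ℝ) :
    HasDerivAt (fun z => -hc + (d : ℝ) * arctanh (θ * Real.tanh z)) (Dfun d θ x) x := by
  have ht1 : -1 < θ * Real.tanh x := by nlinarith [neg_one_lt_tanh x]
  have ht2 : θ * Real.tanh x < 1 := by nlinarith [tanh_lt_one x]
  have hu : HasDerivAt (fun y => θ * Real.tanh y) (θ * (1 - Real.tanh x ^ 2)) x :=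
    (hasDerivAt_tanh x).const_mul θ
  have ha := (hasDerivAt_arctanh ht1 ht2).comp x hu
  have hb := (ha.const_mul (d : ℝ)).const_add (-hc)
  refine hb.congr_deriv (Eq.symm ?_)
  rw [Dfun]
  have h1 : (1:ℝ) - (θ * Real.tanh x) ^ 2 = 1 - θ ^ 2 * Real.tanh x ^ 2 := by ring
  rw [h1]
  field_simp [(denom_pos hθ1 hθ2 x).ne']

lemma F_bounds (hd : 2 ≤ d) (hθ1 : 0 < θ) (hθ2 : θ < 1) (x : ℝ) :
    -hc - (d : ℝ) * arctanh θ < -hc + (d : ℝ) * arctanh (θ * Real.tanh x) ∧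
      -hc + (d : ℝ) * arctanh (θ * Real.tanh x) < -hc + (d : ℝ) * arctanh θ := by
  have hd0 : (0:ℝ) < d := by exact_mod_cast Nat.lt_of_lt_of_le (by norm_num) hd
  have ht1 : -1 < θ * Real.tanh x := by nlinarith [neg_one_lt_tanh x]
  have ht2 : θ * Real.tanh x < 1 := by nlinarith [tanh_lt_one x]
  have hmθ : -θ < θ * Real.tanh x := by nlinarith [neg_one_lt_tanh x]
  have hθlt : θ * Real.tanh x < θ := by nlinarith [tanh_lt_one x]
  have h1 := arctanh_lt_arctanh (by linarith : (-1:ℝ) < -θ) hmθ ht2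
  have h2 := arctanh_lt_arctanh ht1 hθlt hθ2
  rw [arctanh_neg] at h1
  constructor <;> nlinarith

end PsiAux

def orbSeq (ψ : ℝ → ℝ) (ε : ℕ → ℝ) (c : ℝ) (n : ℕ) : ℕ → ℝ
  | 0 => c - ε n
  | i + 1 => ψ (orbSeq ψ ε c n i) - ε (n - (i + 1))

set_option maxHeartbeats 4000000 in
/-- when `Σ_{j=1}^n (Σ_{i=j}^n ε_i)² → ∞`, the perturbed compositions
forget their argument: `ψ̃_{k,n}(x) - ψ̃_{k,n}(y) → 0` for all `x, y`
(uniqueness of the Gibbs measure at the recursion level). -/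
theorem perturbed_compositions_forget_boundary_condition
    (d : ℕ) (hd : 2 ≤ d) (θ hc : ℝ) (hθ : θ ∈ Set.Ioo (0 : ℝ) 1) (hhc : 0 < hc)
    (ψ : ℝ → ℝ) (hψ : ψ = fun x => -hc + d * arctanh (θ * Real.tanh x))
    (bm bp : ℝ) (hlt : bm < bp)
    (hfix : ∀ x, ψ x = x ↔ x = bm ∨ x = bp)
    (hsaddle : deriv ψ bp = 1) (hstable : deriv ψ bm < 1)
    (ε : ℕ → ℝ) (hpos : ∀ n, 1 ≤ n → 0 < ε n)
    (hdec : ∀ n, 1 ≤ n → ε (n + 1) ≤ ε n)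
    (hlim : Filter.Tendsto ε Filter.atTop (nhds 0))
    (hdiv : Filter.Tendsto
      (fun n : ℕ => ∑ j ∈ Finset.Icc 1 n, (∑ i ∈ Finset.Icc j n, ε i) ^ 2)
      Filter.atTop Filter.atTop)
    (Ψ : ℕ → ℕ → ℝ → ℝ)
    (hdiag : ∀ n x, Ψ n n x = ψ x - ε n)
    (hrec : ∀ k n, k < n → ∀ x, Ψ k n x = ψ (Ψ (k + 1) n x) - ε k) :
    ∀ k, 1 ≤ k → ∀ x y : ℝ,
      Filter.Tendsto (fun n => Ψ k n x - Ψ k n y) Filter.atTop (nhds 0) := by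
  obtain ⟨hθ1, hθ2⟩ := hθ
  have hd0 : (0:ℝ) < d := by exact_mod_cast Nat.lt_of_lt_of_le (by norm_num) hd
  have hder : ∀ z, HasDerivAt ψ (PsiAux.Dfun d θ z) z := by
    rw [hψ]; exact fun z => PsiAux.hasDerivAt_F hθ1 hθ2 z
  have hderiv : ∀ z, deriv ψ z = PsiAux.Dfun d θ z := fun z => (hder z).deriv
  have hdiffable : Differentiable ℝ ψ := fun z => (hder z).differentiableAt
  have hcont : Continuous ψ := hdiffable.continuous
  have hDpos : ∀ z, 0 < PsiAux.Dfun d θ z := PsiAux.Dfun_pos hd hθ1 hθ2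
  have hmono : StrictMono ψ :=
    strictMono_of_deriv_pos (fun z => by rw [hderiv z]; exact hDpos z)
  have hub : ∀ z, ψ z < -hc + d * arctanh θ := by
    rw [hψ]; exact fun z => (PsiAux.F_bounds hd hθ1 hθ2 z).2
  have hlb : ∀ z, -hc - d * arctanh θ < ψ z := by
    rw [hψ]; exact fun z => (PsiAux.F_bounds hd hθ1 hθ2 z).1
  set M : ℝ := -hc + d * arctanh θ with hM
  set m : ℝ := -hc - d * arctanh θ with hm
  have hfixbm : ψ bm = bm := (hfix bm).mpr (Or.inl rfl)
  have hfixbp : ψ bp = bp := (hfix bp).mpr (Or.inr rfl)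
  have hDbm : PsiAux.Dfun d θ bm < 1 := by rw [← hderiv bm]; exact hstable
  have hDbp : PsiAux.Dfun d θ bp = 1 := by rw [← hderiv bp]; exact hsaddle
  have hmlt : m < bm := by have := hlb bm; rwa [hfixbm] at this
  have harc : 0 < arctanh θ := by
    have := PsiAux.arctanh_lt_arctanh (by norm_num) hθ1 hθ2
    rwa [PsiAux.arctanh_zero] at this
  have hmM : m < M := by rw [hM, hm]; nlinarith
  have hbm0 : bm < 0 := by
    by_contra h
    push_neg at h
    have h2 : Real.tanh 0 ≤ Real.tanh bm := PsiAux.tanh_strictMono.monotone h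
    rw [Real.tanh_zero] at h2
    have h3 : Real.tanh bm < Real.tanh bp := PsiAux.tanh_strictMono hlt
    have h1 : Real.tanh bm ^ 2 < Real.tanh bp ^ 2 := by nlinarith
    have := PsiAux.Dfun_lt hd hθ1 hθ2 h1
    rw [hDbp] at this
    linarith
  have hψ0 : ψ 0 = -hc := by
    rw [hψ]; simp [Real.tanh_zero, PsiAux.arctanh_zero]
  have hbp0 : 0 < bp := by
    rcases lt_trichotomy bp 0 with hneg | hzero | hpos
    · exfalso
      have hmono2 : StrictMonoOn (fun z => ψ z - z) (Set.Icc bp 0) := by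
        apply strictMonoOn_of_deriv_pos (convex_Icc _ _)
        · exact (hcont.sub continuous_id).continuousOn
        · intro z hz
          rw [interior_Icc] at hz
          have hzd : deriv (fun z => ψ z - z) z = PsiAux.Dfun d θ z - 1 := by
            have := (hder z).sub (hasDerivAt_id z)
            simpa [Pi.sub_def] using this.deriv
          rw [hzd]
          have h2 := PsiAux.tanh_strictMono hz.1
          have h3 : Real.tanh z < Real.tanh 0 := PsiAux.tanh_strictMono hz.2
          rw [Real.tanh_zero] at h3
          have h1 : Real.tanh z ^ 2 < Real.tanh bp ^ 2 := by nlinarith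
          have := PsiAux.Dfun_lt hd hθ1 hθ2 h1
          rw [hDbp] at this
          linarith
      have := hmono2 (Set.left_mem_Icc.mpr hneg.le) (Set.right_mem_Icc.mpr hneg.le) hneg
      simp only [hfixbp, hψ0] at this
      linarith
    · exfalso
      rw [hzero] at hfixbp; rw [hψ0] at hfixbp; linarith
    · exact hpos
  -- sign facts for ψ z - z
  have hroot : ∀ z, ψ z = z → z = bm ∨ z = bp := fun z h => (hfix z).mp h
  have hgcont : Continuous (fun z => ψ z - z) := hcont.sub continuous_id
  have hsignmid : ∀ z, bm < z → z < bp → ψ z < z := by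
    intro z h1 h2
    by_contra hge
    push_neg at hge
    rcases eq_or_lt_of_le hge with heq | hlt2
    · rcases hroot z heq.symm with h | h
      · rw [h] at h1; exact lt_irrefl _ h1
      · rw [h] at h2; exact lt_irrefl _ h2
    · have hz0 : z ≠ 0 := by
        intro h; rw [h, hψ0] at hlt2; linarith
      rcases lt_or_gt_of_ne hz0 with hz | hz
      · have hmem : (0:ℝ) ∈ Set.Ioo ((fun z => ψ z - z) 0) ((fun z => ψ z - z) z) := by
          simp only
          exact ⟨by rw [hψ0]; linarith, by linarith⟩
        obtain ⟨w, hw, hweq⟩ := intermediate_value_Ioo' hz.le hgcont.continuousOn hmem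
        simp only at hweq
        have hww : ψ w = w := by linarith
        rcases hroot w hww with h | h
        · rw [h] at hw; linarith [hw.1]
        · rw [h] at hw; linarith [hw.2]
      · have hmem : (0:ℝ) ∈ Set.Ioo ((fun z => ψ z - z) 0) ((fun z => ψ z - z) z) := by
          simp only
          exact ⟨by rw [hψ0]; linarith, by linarith⟩
        obtain ⟨w, hw, hweq⟩ := intermediate_value_Ioo hz.le hgcont.continuousOn hmem
        simp only at hweq
        have hww : ψ w = w := by linarith
        rcases hroot w hww with h | h
        · rw [h] at hw; linarith [hw.1]
        · rw [h] at hw; linarith [hw.2]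
  
  have hsignhigh : ∀ z, bp < z → ψ z < z := by
    intro z h2
    by_contra hge
    push_neg at hge
    rcases eq_or_lt_of_le hge with heq | hlt2
    · rcases hroot z heq.symm with h | h
      · rw [h] at h2; linarith
      · rw [h] at h2; exact lt_irrefl _ h2
    · -- ψ z > z, but ψ z < M so z < M
      have hzM : z < M := lt_trans hlt2 (hub z)
      set z1 : ℝ := M + 1 with hz1
      have hz1z : z < z1 := by rw [hz1]; linarith
      have hgz1 : ψ z1 - z1 < 0 := by have := hub z1; rw [hz1]; rw [hz1] at this; linarith
      have hmem : (0:ℝ) ∈ Set.Ioo ((fun z => ψ z - z) z1) ((fun z => ψ z - z) z) := by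
        simp only
        exact ⟨hgz1, by linarith⟩
      obtain ⟨w, hw, hweq⟩ := intermediate_value_Ioo' hz1z.le hgcont.continuousOn hmem
      simp only at hweq
      have hww : ψ w = w := by linarith
      rcases hroot w hww with h | h
      · rw [h] at hw; linarith [hw.1]
      · rw [h] at hw; linarith [hw.1]
  have hsignlow : ∀ z, z < bm → z < ψ z := by
    intro z h2
    by_contra hge
    push_neg at hge
    rcases eq_or_lt_of_le hge with heq | hlt2
    · rcases hroot z heq with h | h
      · rw [h] at h2; exact lt_irrefl _ h2
      · rw [h] at h2; linarith
    · have hzm : m < z := lt_trans (hlb z) hlt2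
      set z2 : ℝ := m - 1 with hz2
      have hz2z : z2 < z := by rw [hz2]; linarith
      have hgz2 : 0 < ψ z2 - z2 := by have := hlb z2; rw [hz2]; rw [hz2] at this; linarith
      have hmem : (0:ℝ) ∈ Set.Ioo ((fun z => ψ z - z) z) ((fun z => ψ z - z) z2) := by
        simp only
        exact ⟨by linarith, hgz2⟩
      obtain ⟨w, hw, hweq⟩ := intermediate_value_Ioo' hz2z.le hgcont.continuousOn hmem
      simp only at hweq
      have hww : ψ w = w := by linarith
      rcases hroot w hww with h | h
      · rw [h] at hw; linarith [hw.2]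
      · rw [h] at hw; linarith [hw.2]
  have hsign1 : ∀ z, bm ≤ z → ψ z ≤ z := by
    intro z hz
    rcases eq_or_lt_of_le hz with h | h
    · rw [← h, hfixbm]
    rcases lt_trichotomy z bp with h2 | h2 | h2
    · exact (hsignmid z h h2).le
    · rw [h2, hfixbp]
    · exact (hsignhigh z h2).le
  have hsign2 : ∀ z, z ≤ bm → z ≤ ψ z := by
    intro z hz
    rcases eq_or_lt_of_le hz with h | h
    · rw [h, hfixbm]
    · exact (hsignlow z h).le
  -- contraction on (-∞, bm]
  have hcontr : ∀ y1 y2, y1 ≤ y2 → y2 ≤ bm →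
      ψ y2 - ψ y1 ≤ PsiAux.Dfun d θ bm * (y2 - y1) := by
    intro y1 y2 h12 h2bm
    have hmono3 : MonotoneOn (fun z => PsiAux.Dfun d θ bm * z - ψ z) (Set.Iic bm) := by
      apply monotoneOn_of_deriv_nonneg (convex_Iic _)
      · exact ((continuous_const.mul continuous_id).sub hcont).continuousOn
      · intro z _
        exact (((hasDerivAt_id z).const_mul (PsiAux.Dfun d θ bm)).sub (hder z)).differentiableAt.differentiableWithinAt
      · intro z hz
        rw [interior_Iic] at hz
        have hzd : deriv (fun z => PsiAux.Dfun d θ bm * z - ψ z) z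
            = PsiAux.Dfun d θ bm - PsiAux.Dfun d θ z := by
          have := ((hasDerivAt_id z).const_mul (PsiAux.Dfun d θ bm)).sub (hder z)
          simpa [Pi.sub_def] using this.deriv
        rw [hzd]
        have h3 : Real.tanh z < Real.tanh bm := PsiAux.tanh_strictMono hz
        have h4 : Real.tanh bm < Real.tanh 0 := PsiAux.tanh_strictMono hbm0
        rw [Real.tanh_zero] at h4
        have h5 : Real.tanh bm ^ 2 ≤ Real.tanh z ^ 2 := by nlinarith
        linarith [PsiAux.Dfun_anti hd hθ1 hθ2 h5]
    have h6 := hmono3 (Set.mem_Iic.mpr (h12.trans h2bm)) (Set.mem_Iic.mpr h2bm) h12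
    simp only at h6
    have h7 : PsiAux.Dfun d θ bm * (y2 - y1)
        = PsiAux.Dfun d θ bm * y2 - PsiAux.Dfun d θ bm * y1 := by ring
    rw [h7]
    linarith
  -- quadratic behaviour near bp
  have htbp : 0 < Real.tanh bp := by
    have := PsiAux.tanh_strictMono hbp0; rwa [Real.tanh_zero] at this
  set c1 : ℝ := d * θ * (1 - θ ^ 2) * Real.tanh bp * (1 - Real.tanh bp ^ 2) with hc1def
  have hc1pos : 0 < c1 := by
    rw [hc1def]
    have h1 : (0:ℝ) < d * θ := mul_pos hd0 hθ1
    exact mul_pos (mul_pos (mul_pos h1 (by nlinarith : (0:ℝ) < 1 - θ ^ 2)) htbp)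
      (by nlinarith [PsiAux.tanh_sq_lt_one bp] : (0:ℝ) < 1 - Real.tanh bp ^ 2)
  have htanhdiffable : Differentiable ℝ Real.tanh :=
    fun z => (PsiAux.hasDerivAt_tanh z).differentiableAt
  have htanhcont : Continuous Real.tanh := htanhdiffable.continuous
  have htanhdiff : ∀ z, 0 ≤ z → z ≤ bp →
      (1 - Real.tanh bp ^ 2) * (bp - z) ≤ Real.tanh bp - Real.tanh z := by
    intro z h0 hzbp
    have hmono4 : MonotoneOn (fun w => Real.tanh w - (1 - Real.tanh bp ^ 2) * w)
        (Set.Icc 0 bp) := by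
      apply monotoneOn_of_deriv_nonneg (convex_Icc _ _)
      · exact (htanhcont.sub (continuous_const.mul continuous_id)).continuousOn
      · intro w _
        exact ((PsiAux.hasDerivAt_tanh w).sub
          ((hasDerivAt_id w).const_mul (1 - Real.tanh bp ^ 2))).differentiableAt.differentiableWithinAt
      · intro w hw
        rw [interior_Icc] at hw
        have hwd : deriv (fun w => Real.tanh w - (1 - Real.tanh bp ^ 2) * w) w
            = (1 - Real.tanh w ^ 2) - (1 - Real.tanh bp ^ 2) := by
          have := (PsiAux.hasDerivAt_tanh w).sub
            ((hasDerivAt_id w).const_mul (1 - Real.tanh bp ^ 2))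
          simpa [Pi.sub_def] using this.deriv
        rw [hwd]
        have h1 : Real.tanh 0 < Real.tanh w := PsiAux.tanh_strictMono hw.1
        rw [Real.tanh_zero] at h1
        have h2 : Real.tanh w < Real.tanh bp := PsiAux.tanh_strictMono hw.2
        nlinarith
    have := hmono4 (Set.mem_Icc.mpr ⟨h0, hzbp⟩) (Set.mem_Icc.mpr ⟨le_trans h0 hzbp, le_refl _⟩) hzbp
    simp only at this
    linarith
  have hDlow : ∀ z, 0 ≤ z → z ≤ bp → 1 + c1 * (bp - z) ≤ PsiAux.Dfun d θ z := by
    intro z h0 hzbp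
    have htz0 : 0 ≤ Real.tanh z := by
      have := PsiAux.tanh_strictMono.monotone h0; rwa [Real.tanh_zero] at this
    have htzb : Real.tanh z ≤ Real.tanh bp := PsiAux.tanh_strictMono.monotone hzbp
    have hA := PsiAux.denom_pos hθ1 hθ2 z
    have hB := PsiAux.denom_pos hθ1 hθ2 bp
    have hK0 : 0 ≤ d * θ * (1 - θ ^ 2) * (Real.tanh bp ^ 2 - Real.tanh z ^ 2) := by
      have h1 : (0:ℝ) < d * θ := mul_pos hd0 hθ1
      exact mul_nonneg (mul_nonneg h1.le (by nlinarith : (0:ℝ) ≤ 1 - θ ^ 2))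
        (by nlinarith : (0:ℝ) ≤ Real.tanh bp ^ 2 - Real.tanh z ^ 2)
    have hstep2 : PsiAux.Dfun d θ bp
        + d * θ * (1 - θ ^ 2) * (Real.tanh bp ^ 2 - Real.tanh z ^ 2) ≤ PsiAux.Dfun d θ z := by
      rw [PsiAux.Dfun, PsiAux.Dfun, div_add' _ _ _ hB.ne', div_le_div_iff₀ hB hA]
      have hA1 : 1 - θ ^ 2 * Real.tanh z ^ 2 ≤ 1 := by
        nlinarith [mul_nonneg (sq_nonneg θ) (sq_nonneg (Real.tanh z))]
      have hB1 : 1 - θ ^ 2 * Real.tanh bp ^ 2 ≤ 1 := by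
        nlinarith [mul_nonneg (sq_nonneg θ) (sq_nonneg (Real.tanh bp))]
      have hAB : (1 - θ ^ 2 * Real.tanh z ^ 2) * (1 - θ ^ 2 * Real.tanh bp ^ 2) ≤ 1 := by
        calc (1 - θ ^ 2 * Real.tanh z ^ 2) * (1 - θ ^ 2 * Real.tanh bp ^ 2)
            ≤ 1 * (1 - θ ^ 2 * Real.tanh bp ^ 2) := by
              exact mul_le_mul_of_nonneg_right hA1 hB.le
          _ ≤ 1 := by rw [one_mul]; exact hB1
      nlinarith [mul_nonneg hK0 (sub_nonneg.mpr hAB)]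
    have hstep3 : c1 * (bp - z) ≤ d * θ * (1 - θ ^ 2)
        * (Real.tanh bp ^ 2 - Real.tanh z ^ 2) := by
      have h1 := htanhdiff z h0 hzbp
      have h2 : (0:ℝ) < d * θ * (1 - θ ^ 2) :=
        mul_pos (mul_pos hd0 hθ1) (by nlinarith : (0:ℝ) < 1 - θ ^ 2)
      rw [hc1def]
      have e1 : Real.tanh bp * ((1 - Real.tanh bp ^ 2) * (bp - z))
          ≤ Real.tanh bp ^ 2 - Real.tanh z ^ 2 := by
        nlinarith [mul_le_mul_of_nonneg_left h1 htbp.le,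
          mul_nonneg htz0 (sub_nonneg.mpr htzb)]
      nlinarith [mul_le_mul_of_nonneg_left e1 h2.le]
    rw [hDbp] at hstep2
    linarith
  have hquad : ∀ s, 0 ≤ s → s ≤ bp → c1 / 2 * s ^ 2 ≤ (bp - s) - ψ (bp - s) := by
    intro s h0 hs
    have hmono5 : MonotoneOn (fun s => (bp - s) - ψ (bp - s) - c1 / 2 * s ^ 2)
        (Set.Icc 0 bp) := by
      apply monotoneOn_of_deriv_nonneg (convex_Icc _ _)
      · apply ContinuousOn.sub
        apply ContinuousOn.sub
        · exact (continuous_const.sub continuous_id).continuousOn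
        · exact (hcont.comp (continuous_const.sub continuous_id)).continuousOn
        · exact (continuous_const.mul (continuous_pow 2)).continuousOn
      · intro w _
        have h1 : HasDerivAt (fun s : ℝ => bp - s) (-1) w := by
          simpa using (hasDerivAt_id w).const_sub bp
        have h2 : HasDerivAt (fun s : ℝ => ψ (bp - s)) (PsiAux.Dfun d θ (bp - w) * (-1)) w :=
          (hder (bp - w)).comp w h1
        have h3 : HasDerivAt (fun s : ℝ => c1 / 2 * s ^ 2) (c1 / 2 * (2 * w)) w := by
          simpa using (hasDerivAt_pow 2 w).const_mul (c1 / 2)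
        exact ((h1.sub h2).sub h3).differentiableAt.differentiableWithinAt
      · intro w hw
        rw [interior_Icc] at hw
        have h1 : HasDerivAt (fun s : ℝ => bp - s) (-1) w := by
          simpa using (hasDerivAt_id w).const_sub bp
        have h2 : HasDerivAt (fun s : ℝ => ψ (bp - s)) (PsiAux.Dfun d θ (bp - w) * (-1)) w :=
          (hder (bp - w)).comp w h1
        have h3 : HasDerivAt (fun s : ℝ => c1 / 2 * s ^ 2) (c1 / 2 * (2 * w)) w := by
          simpa using (hasDerivAt_pow 2 w).const_mul (c1 / 2)
        have hwd : deriv (fun s => bp - s - ψ (bp - s) - c1 / 2 * s ^ 2) w = _ := ((h1.sub h2).sub h3).deriv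
        rw [hwd]
        have h4 := hDlow (bp - w) (by linarith [hw.2]) (by linarith [hw.1])
        have h5 : bp - (bp - w) = w := by ring
        rw [h5] at h4
        nlinarith
    have h00 := hmono5 (Set.mem_Icc.mpr ⟨le_refl 0, (le_trans h0 hs).trans (le_refl _)⟩)
      (Set.mem_Icc.mpr ⟨h0, hs⟩) h0
    simp only at h00
    rw [sub_zero] at h00
    have : bp - ψ bp - c1 / 2 * 0 ^ 2 = 0 := by rw [hfixbp]; ring
    rw [this] at h00
    linarith
  
  have hdecle : ∀ i j : ℕ, 1 ≤ i → i ≤ j → ε j ≤ ε i := by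
    intro i j hi hij
    induction j, hij using Nat.le_induction with
    | base => exact le_refl _
    | succ j hij ih => exact le_trans (hdec j (le_trans hi hij)) ih
  set T : ℕ → ℕ → ℝ := fun j n => orbSeq ψ ε M n (n - j) with hTdef
  set B : ℕ → ℕ → ℝ := fun j n => orbSeq ψ ε m n (n - j) with hBdef
  have hTdiag : ∀ n, T n n = M - ε n := by
    intro n; rw [hTdef]; simp only [Nat.sub_self]; rfl
  have hBdiag : ∀ n, B n n = m - ε n := by
    intro n; rw [hBdef]; simp only [Nat.sub_self]; rfl
  have hTrec : ∀ j n, j < n → T j n = ψ (T (j+1) n) - ε j := by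
    intro j n h
    have h1 : n - j = (n - (j+1)) + 1 := by omega
    have h2 : n - ((n - (j+1)) + 1) = j := by omega
    rw [hTdef]
    simp only
    rw [h1]
    show ψ (orbSeq ψ ε M n (n - (j+1))) - ε (n - ((n - (j+1)) + 1))
      = ψ (orbSeq ψ ε M n (n - (j+1))) - ε j
    rw [h2]
  have hBrec : ∀ j n, j < n → B j n = ψ (B (j+1) n) - ε j := by
    intro j n h
    have h1 : n - j = (n - (j+1)) + 1 := by omega
    have h2 : n - ((n - (j+1)) + 1) = j := by omega
    rw [hBdef]
    simp only
    rw [h1]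
    show ψ (orbSeq ψ ε m n (n - (j+1))) - ε (n - ((n - (j+1)) + 1))
      = ψ (orbSeq ψ ε m n (n - (j+1))) - ε j
    rw [h2]
  clear_value T B
  have hΨT : ∀ (x : ℝ) n j, j ≤ n → Ψ j n x ≤ T j n := by
    intro x n
    have key : ∀ i j, j + i = n → Ψ j n x ≤ T j n := by
      intro i
      induction i with
      | zero =>
        intro j hj
        have hjn : j = n := by omega
        subst hjn
        rw [hdiag, hTdiag]
        linarith [hub x]
      | succ i ih =>
        intro j hj
        have hjn : j < n := by omega
        rw [hrec j n hjn, hTrec j n hjn]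
        linarith [hmono.monotone (ih (j+1) (by omega))]
    intro j hj
    exact key (n - j) j (by omega)
  have hBΨ : ∀ (x : ℝ) n j, j ≤ n → B j n ≤ Ψ j n x := by
    intro x n
    have key : ∀ i j, j + i = n → B j n ≤ Ψ j n x := by
      intro i
      induction i with
      | zero =>
        intro j hj
        have hjn : j = n := by omega
        subst hjn
        rw [hdiag, hBdiag]
        linarith [hlb x]
      | succ i ih =>
        intro j hj
        have hjn : j < n := by omega
        rw [hrec j n hjn, hBrec j n hjn]
        linarith [hmono.monotone (ih (j+1) (by omega))]
    intro j hj
    exact key (n - j) j (by omega)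
  have hTM : ∀ n j, 1 ≤ j → j ≤ n → T j n ≤ M := by
    intro n
    have key : ∀ i j, j + i = n → 1 ≤ j → T j n ≤ M := by
      intro i
      induction i with
      | zero =>
        intro j hj hj1
        have hjn : j = n := by omega
        subst hjn
        rw [hTdiag]
        linarith [hpos j hj1]
      | succ i ih =>
        intro j hj hj1
        have hjn : j < n := by omega
        rw [hTrec j n hjn]
        linarith [hub (T (j+1) n), hpos j hj1]
    intro j hj1 hj
    exact key (n - j) j (by omega) hj1
  have hmB : ∀ n j, 1 ≤ j → j ≤ n → m - ε 1 ≤ B j n := by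
    intro n
    have key : ∀ i j, j + i = n → 1 ≤ j → m - ε 1 ≤ B j n := by
      intro i
      induction i with
      | zero =>
        intro j hj hj1
        have hjn : j = n := by omega
        subst hjn
        rw [hBdiag]
        linarith [hdecle 1 j (le_refl 1) hj1]
      | succ i ih =>
        intro j hj hj1
        have hjn : j < n := by omega
        rw [hBrec j n hjn]
        linarith [hlb (B (j+1) n), hdecle 1 j (le_refl 1) hj1]
    intro j hj1 hj
    exact key (n - j) j (by omega) hj1
  have hBT : ∀ n j, j ≤ n → B j n ≤ T j n := by
    intro n
    have key : ∀ i j, j + i = n → B j n ≤ T j n := by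
      intro i
      induction i with
      | zero =>
        intro j hj
        have hjn : j = n := by omega
        subst hjn
        rw [hTdiag, hBdiag]
        linarith
      | succ i ih =>
        intro j hj
        have hjn : j < n := by omega
        rw [hTrec j n hjn, hBrec j n hjn]
        linarith [hmono.monotone (ih (j+1) (by omega))]
    intro j hj
    exact key (n - j) j (by omega)
  
  have hBbm : ∀ n j, j ≤ n → B j n ≤ bm - ε j := by
    intro n
    have key : ∀ i j, j + i = n → B j n ≤ bm - ε j := by
      intro i
      induction i with
      | zero =>
        intro j hj
        have hjn : j = n := by omega
        subst hjn
        rw [hBdiag]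
        linarith
      | succ i ih =>
        intro j hj
        have hjn : j < n := by omega
        rw [hBrec j n hjn]
        have h1 := ih (j+1) (by omega)
        have h2 : B (j+1) n ≤ bm := by linarith [hpos (j+1) (by omega)]
        have h3 := hmono.monotone h2
        rw [hfixbm] at h3
        linarith
    intro j hj
    exact key (n - j) j (by omega)
  have hTanti : ∀ n j, j ≤ n → T j (n+1) ≤ T j n := by
    intro n
    have key : ∀ i j, j + i = n → T j (n+1) ≤ T j n := by
      intro i
      induction i with
      | zero =>
        intro j hj
        have hjn : j = n := by omega
        subst hjn
        rw [hTrec j (j+1) (by omega), hTdiag, hTdiag]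
        linarith [hub (T (j+1) (j+1)), hub (M - ε (j+1))]
      | succ i ih =>
        intro j hj
        have hjn : j < n := by omega
        rw [hTrec j n hjn, hTrec j (n+1) (by omega)]
        linarith [hmono.monotone (ih (j+1) (by omega))]
    intro j hj
    exact key (n - j) j (by omega)
  have hBmono : ∀ n j, j ≤ n → B j n ≤ B j (n+1) := by
    intro n
    have key : ∀ i j, j + i = n → B j n ≤ B j (n+1) := by
      intro i
      induction i with
      | zero =>
        intro j hj
        have hjn : j = n := by omega
        subst hjn
        rw [hBrec j (j+1) (by omega), hBdiag, hBdiag]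
        linarith [hlb (B (j+1) (j+1)), hlb (m - ε (j+1))]
      | succ i ih =>
        intro j hj
        have hjn : j < n := by omega
        rw [hBrec j n hjn, hBrec j (n+1) (by omega)]
        linarith [hmono.monotone (ih (j+1) (by omega))]
    intro j hj
    exact key (n - j) j (by omega)
  
  set m' : ℝ := m - ε 1 with hm'def
  have hm'T : ∀ n j, 1 ≤ j → j ≤ n → m' ≤ T j n := fun n j h1 h2 =>
    le_trans (hmB n j h1 h2) (hBT n j h2)
  have hBM : ∀ n j, 1 ≤ j → j ≤ n → B j n ≤ M := fun n j h1 h2 =>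
    le_trans (hBT n j h2) (hTM n j h1 h2)
  have hbddT : ∀ j, 1 ≤ j → BddBelow (Set.range (fun i => T j (j + i))) := by
    intro j hj
    refine ⟨m', ?_⟩
    rintro w ⟨i, rfl⟩
    exact hm'T (j + i) j hj (by omega)
  have hantiT : ∀ j, 1 ≤ j → Antitone (fun i => T j (j + i)) := by
    intro j hj
    apply antitone_nat_of_succ_le
    intro i
    exact hTanti (j + i) j (by omega)
  have hbddB : ∀ j, 1 ≤ j → BddAbove (Set.range (fun i => B j (j + i))) := by
    intro j hj
    refine ⟨M, ?_⟩
    rintro w ⟨i, rfl⟩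
    exact hBM (j + i) j hj (by omega)
  have hmonoB : ∀ j, 1 ≤ j → Monotone (fun i => B j (j + i)) := by
    intro j hj
    apply monotone_nat_of_le_succ
    intro i
    exact hBmono (j + i) j (by omega)
  set τ : ℕ → ℝ := fun j => ⨅ i, T j (j + i) with hτdef
  set β : ℕ → ℝ := fun j => ⨆ i, B j (j + i) with hβdef
  have hτlim : ∀ j, 1 ≤ j → Filter.Tendsto (fun n => T j n) Filter.atTop (nhds (τ j)) := by
    intro j hj
    have h1 : Filter.Tendsto (fun i => T j (j + i)) Filter.atTop (nhds (τ j)) := by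
      rw [hτdef]
      exact tendsto_atTop_ciInf (hantiT j hj) (hbddT j hj)
    have h2 : (fun i => T j (j + i)) = (fun i => T j (i + j)) := by
      funext i; rw [Nat.add_comm]
    rw [h2] at h1
    exact (Filter.tendsto_add_atTop_iff_nat j).mp h1
  have hβlim : ∀ j, 1 ≤ j → Filter.Tendsto (fun n => B j n) Filter.atTop (nhds (β j)) := by
    intro j hj
    have h1 : Filter.Tendsto (fun i => B j (j + i)) Filter.atTop (nhds (β j)) := by
      rw [hβdef]
      exact tendsto_atTop_ciSup (hmonoB j hj) (hbddB j hj)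
    have h2 : (fun i => B j (j + i)) = (fun i => B j (i + j)) := by
      funext i; rw [Nat.add_comm]
    rw [h2] at h1
    exact (Filter.tendsto_add_atTop_iff_nat j).mp h1
  clear_value τ β
  have hτrec : ∀ j, 1 ≤ j → τ j = ψ (τ (j+1)) - ε j := by
    intro j hj
    have h1 : Filter.Tendsto (fun n => ψ (T (j+1) n) - ε j) Filter.atTop
        (nhds (ψ (τ (j+1)) - ε j)) :=
      Filter.Tendsto.sub_const ((hcont.tendsto (τ (j+1))).comp (hτlim (j+1) (by omega))) (ε j)
    have h2 : ∀ᶠ n in Filter.atTop, ψ (T (j+1) n) - ε j = T j n := by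
      filter_upwards [Filter.eventually_ge_atTop (j+1)] with n hn
      exact (hTrec j n (by omega)).symm
    exact tendsto_nhds_unique (hτlim j hj) (h1.congr' h2)
  have hβrec : ∀ j, 1 ≤ j → β j = ψ (β (j+1)) - ε j := by
    intro j hj
    have h1 : Filter.Tendsto (fun n => ψ (B (j+1) n) - ε j) Filter.atTop
        (nhds (ψ (β (j+1)) - ε j)) :=
      Filter.Tendsto.sub_const ((hcont.tendsto (β (j+1))).comp (hβlim (j+1) (by omega))) (ε j)
    have h2 : ∀ᶠ n in Filter.atTop, ψ (B (j+1) n) - ε j = B j n := by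
      filter_upwards [Filter.eventually_ge_atTop (j+1)] with n hn
      exact (hBrec j n (by omega)).symm
    exact tendsto_nhds_unique (hβlim j hj) (h1.congr' h2)
  have hτub : ∀ j, 1 ≤ j → τ j ≤ M := by
    intro j hj
    exact le_of_tendsto (hτlim j hj)
      (Filter.eventually_atTop.mpr ⟨j, fun n hn => hTM n j hj hn⟩)
  have hτlb : ∀ j, 1 ≤ j → m' ≤ τ j := by
    intro j hj
    exact ge_of_tendsto (hτlim j hj)
      (Filter.eventually_atTop.mpr ⟨j, fun n hn => hm'T n j hj hn⟩)
  have hβbm : ∀ j, 1 ≤ j → β j ≤ bm - ε j := by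
    intro j hj
    exact le_of_tendsto (hβlim j hj)
      (Filter.eventually_atTop.mpr ⟨j, fun n hn => hBbm n j hn⟩)
  have hβlb : ∀ j, 1 ≤ j → m' ≤ β j := by
    intro j hj
    exact ge_of_tendsto (hβlim j hj)
      (Filter.eventually_atTop.mpr ⟨j, fun n hn => hmB n j hj hn⟩)
  have hβτ : ∀ j, 1 ≤ j → β j ≤ τ j := by
    intro j hj
    exact le_of_tendsto_of_tendsto (hβlim j hj) (hτlim j hj)
      (Filter.eventually_atTop.mpr ⟨j, fun n hn => hBT n j hn⟩)
  
  have hkey : ∀ j, 1 ≤ j → τ j = β j := by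
    intro k0 hk0
    by_cases hcase : ∀ j, 1 ≤ j → τ j ≤ bm
    · -- Case 1 : the whole top orbit is below bm; geometric contraction
      have hstepc : ∀ j, 1 ≤ j → τ j - β j ≤ PsiAux.Dfun d θ bm * (τ (j+1) - β (j+1)) := by
        intro j hj
        rw [hτrec j hj, hβrec j hj]
        have h1 := hcontr (β (j+1)) (τ (j+1)) (hβτ (j+1) (by omega)) (hcase (j+1) (by omega))
        linarith
      have hgap : ∀ i, τ k0 - β k0 ≤ (PsiAux.Dfun d θ bm)^i * (τ (k0+i) - β (k0+i)) := by
        intro i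
        induction i with
        | zero => simp
        | succ i ih =>
          have h1 := hstepc (k0+i) (by omega)
          calc τ k0 - β k0 ≤ (PsiAux.Dfun d θ bm)^i * (τ (k0+i) - β (k0+i)) := ih
            _ ≤ (PsiAux.Dfun d θ bm)^i
                * (PsiAux.Dfun d θ bm * (τ (k0+i+1) - β (k0+i+1))) :=
                mul_le_mul_of_nonneg_left h1 (pow_nonneg (hDpos bm).le i)
            _ = (PsiAux.Dfun d θ bm)^(i+1) * (τ (k0+(i+1)) - β (k0+(i+1))) := by ring
      have hgap2 : ∀ i, τ k0 - β k0 ≤ (PsiAux.Dfun d θ bm)^i * (M - m') := by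
        intro i
        refine le_trans (hgap i) (mul_le_mul_of_nonneg_left ?_ (pow_nonneg (hDpos bm).le i))
        have h1 := hτub (k0+i) (by omega)
        have h2 := hβlb (k0+i) (by omega)
        linarith
      have hpow : Filter.Tendsto (fun i => (PsiAux.Dfun d θ bm)^i * (M - m'))
          Filter.atTop (nhds 0) := by
        have h1 := (tendsto_pow_atTop_nhds_zero_of_lt_one (hDpos bm).le hDbm).mul_const (M - m')
        rwa [zero_mul] at h1
      have h1 : τ k0 - β k0 ≤ 0 := ge_of_tendsto' hpow hgap2
      exact le_antisymm (by linarith) (hβτ k0 hk0)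
    · -- Case 2 : the top orbit eventually stays above bm; contradiction with divergence
      exfalso
      push_neg at hcase
      obtain ⟨j0, hj01, hj0bm⟩ := hcase
      have hup : ∀ j, j0 ≤ j → bm < τ j := by
        intro j hj
        induction j, hj using Nat.le_induction with
        | base => exact hj0bm
        | succ j hj ih =>
          by_contra h
          push_neg at h
          have h2 := hmono.monotone h
          rw [hfixbm] at h2
          have h3 := hτrec j (le_trans hj01 hj)
          have h4 := hpos j (le_trans hj01 hj)
          linarith
      have hmono6 : ∀ j, j0 ≤ j → τ j + ε j ≤ τ (j+1) := by
        intro j hj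
        have h1 := hsign1 (τ (j+1)) (le_of_lt (hup (j+1) (by omega)))
        have h3 := hτrec j (le_trans hj01 hj)
        linarith
      have hbddτ : BddAbove (Set.range (fun i => τ (j0 + i))) := by
        refine ⟨M, ?_⟩; rintro w ⟨i, rfl⟩; exact hτub (j0 + i) (by omega)
      have hmono7 : Monotone (fun i => τ (j0 + i)) := by
        apply monotone_nat_of_le_succ
        intro i
        have h1 := hmono6 (j0 + i) (by omega)
        have h2 := hpos (j0 + i) (by omega)
        show τ (j0 + i) ≤ τ (j0 + i + 1)
        linarith
      set L : ℝ := ⨆ i, τ (j0 + i) with hLdef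
      have hLlim : Filter.Tendsto τ Filter.atTop (nhds L) := by
        have h1 : Filter.Tendsto (fun i => τ (j0 + i)) Filter.atTop (nhds L) := by
          rw [hLdef]; exact tendsto_atTop_ciSup hmono7 hbddτ
        have h2 : (fun i => τ (j0 + i)) = (fun i => τ (i + j0)) := by
          funext i; rw [Nat.add_comm]
        rw [h2] at h1
        exact (Filter.tendsto_add_atTop_iff_nat j0).mp h1
      have hLfix : ψ L = L := by
        have h1 : Filter.Tendsto (fun j => τ (j+1)) Filter.atTop (nhds L) :=
          (Filter.tendsto_add_atTop_iff_nat 1).mpr hLlim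
        have h2 : Filter.Tendsto (fun j => ψ (τ (j+1)) - ε j) Filter.atTop
            (nhds (ψ L - 0)) := ((hcont.tendsto L).comp h1).sub hlim
        have h3 : ∀ᶠ j in Filter.atTop, ψ (τ (j+1)) - ε j = τ j := by
          filter_upwards [Filter.eventually_ge_atTop 1] with j hj
          exact (hτrec j hj).symm
        have h4 := tendsto_nhds_unique (h2.congr' h3) hLlim
        rw [sub_zero] at h4
        exact h4
      have hτleL : ∀ j, j0 ≤ j → τ j ≤ L := by
        intro j hj
        have h1 : τ j = (fun i => τ (j0 + i)) (j - j0) := by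
          simp only
          congr 1
          omega
        rw [h1, hLdef]
        exact le_ciSup hbddτ (j - j0)
      clear_value L
      have hLbp : L = bp := by
        rcases hroot L hLfix with h | h
        · exfalso
          have h2 := hτleL (j0+1) (by omega)
          have h3 := hmono6 j0 (le_refl j0)
          have h4 := hpos j0 hj01
          have h5 := hup j0 (le_refl j0)
          rw [h] at h2
          linarith
        · exact h
      have hsum1 : ∀ j, j0 ≤ j → ∀ n, j ≤ n →
          (∑ i ∈ Finset.Icc j n, ε i) ≤ τ (n+1) - τ j := by
        intro j hj n hn
        induction n, hn using Nat.le_induction with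
        | base =>
          rw [Finset.Icc_self, Finset.sum_singleton]
          linarith [hmono6 j hj]
        | succ n hn ih =>
          rw [Finset.sum_Icc_succ_top (by omega : j ≤ n + 1)]
          have h1 := hmono6 (n+1) (by omega)
          linarith
      have hsum2 : ∀ j, j0 ≤ j → ∀ n, j ≤ n →
          (∑ i ∈ Finset.Icc j n, ε i) ≤ bp - τ j := by
        intro j hj n hn
        have h1 := hsum1 j hj n hn
        have h2 := hτleL (n+1) (by omega)
        rw [hLbp] at h2
        linarith
      have hgapstep : ∀ j, j0 ≤ j →
          (τ (j+1) - ψ (τ (j+1))) ≤ (τ (j+1) - β (j+1)) - (τ j - β j) := by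
        intro j hj
        have h1 := hτrec j (le_trans hj01 hj)
        have h2 := hβrec j (le_trans hj01 hj)
        have h3 := hsign2 (β (j+1))
          (by linarith [hβbm (j+1) (by omega), hpos (j+1) (by omega)])
        linarith
      have hgapsum : ∀ n, j0 ≤ n →
          (∑ j ∈ Finset.Icc (j0+1) (n+1), (τ j - ψ (τ j))) ≤ M - m' := by
        intro n hn
        have htel : (∑ j ∈ Finset.Icc (j0+1) (n+1), (τ j - ψ (τ j)))
            ≤ (τ (n+1) - β (n+1)) - (τ j0 - β j0) := by
          induction n, hn using Nat.le_induction with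
          | base =>
            rw [Finset.Icc_self, Finset.sum_singleton]
            exact hgapstep j0 (le_refl _)
          | succ n hn ih =>
            rw [Finset.sum_Icc_succ_top (by omega : j0+1 ≤ n+1+1)]
            have h1 := hgapstep (n+1) (by omega)
            linarith
        have h2 := hτub (n+1) (by omega)
        have h3 := hβlb (n+1) (by omega)
        have h4 := hβτ j0 hj01
        linarith
      have hslim : Filter.Tendsto (fun j => bp - τ j) Filter.atTop (nhds 0) := by
        have h1 : Filter.Tendsto (fun _ : ℕ => bp) Filter.atTop (nhds bp) := tendsto_const_nhds
        have h2 := h1.sub hLlim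
        have h3 : bp - L = 0 := by rw [hLbp]; ring
        rwa [h3] at h2
      obtain ⟨J2', hJ2'⟩ := Filter.eventually_atTop.mp (hslim.eventually_lt_const hbp0)
      set J2 := max J2' (j0 + 2) with hJ2def
      have hJ2j0 : j0 + 2 ≤ J2 := le_max_right _ _
      have hterm : ∀ j, J2 ≤ j → ∀ n, j ≤ n →
          c1 / 2 * (∑ i ∈ Finset.Icc j n, ε i)^2 ≤ τ j - ψ (τ j) := by
        intro j hj n hn
        have hjj0 : j0 ≤ j := by omega
        have hs0 : 0 ≤ bp - τ j := by
          have h1 := hτleL j hjj0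
          rw [hLbp] at h1
          linarith
        have hsbp : bp - τ j ≤ bp := (hJ2' j (by omega)).le
        have hq := hquad (bp - τ j) hs0 hsbp
        have h5 : bp - (bp - τ j) = τ j := by ring
        rw [h5] at hq
        have h6 := hsum2 j hjj0 n hn
        have h7 : 0 ≤ ∑ i ∈ Finset.Icc j n, ε i := Finset.sum_nonneg fun i hi => by
          simp only [Finset.mem_Icc] at hi
          exact (hpos i (by omega)).le
        have h8 : (∑ i ∈ Finset.Icc j n, ε i)^2 ≤ (bp - τ j)^2 := by nlinarith
        nlinarith
      have hC3 : ∀ n, J2 ≤ n → ∀ j, 1 ≤ j → j < J2 →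
          (∑ i ∈ Finset.Icc j n, ε i) ≤ J2 * ε 1 + (bp - bm) := by
        intro n hn j hj1 hj2
        have hsplit : Finset.Icc j n = Finset.Icc j (J2-1) ∪ Finset.Icc J2 n := by
          ext a; simp only [Finset.mem_Icc, Finset.mem_union]; omega
        have hdisj : Disjoint (Finset.Icc j (J2-1)) (Finset.Icc J2 n) := by
          apply Finset.disjoint_left.mpr
          intro a ha hb
          simp only [Finset.mem_Icc] at ha hb
          omega
        rw [hsplit, Finset.sum_union hdisj]
        have h1 : (∑ i ∈ Finset.Icc j (J2-1), ε i) ≤ (J2:ℝ) * ε 1 := by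
          have hstep := Finset.sum_le_card_nsmul (Finset.Icc j (J2-1)) ε (ε 1)
            (fun i hi => hdecle 1 i (le_refl 1)
              (by simp only [Finset.mem_Icc] at hi; omega))
          rw [nsmul_eq_mul] at hstep
          have hcard : ((Finset.Icc j (J2-1)).card : ℝ) ≤ (J2:ℝ) := by
            rw [Nat.card_Icc]
            exact_mod_cast (by omega : J2 - 1 + 1 - j ≤ J2)
          have hε1 : 0 < ε 1 := hpos 1 le_rfl
          nlinarith
        have h2 : (∑ i ∈ Finset.Icc J2 n, ε i) ≤ bp - bm := by
          have h3 := hsum2 J2 (by omega) n hn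
          have h4 := hup J2 (by omega)
          linarith
        linarith
      obtain ⟨N, hN⟩ := Filter.eventually_atTop.mp
        (hdiv.eventually_gt_atTop ((J2:ℝ) * ((J2:ℝ) * ε 1 + (bp - bm))^2 + 2 / c1 * (M - m')))
      set n := max N (J2+1) with hndef
      have hn1 : N ≤ n := le_max_left _ _
      have hn2 : J2 + 1 ≤ n := le_max_right _ _
      have hNn := hN n hn1
      have hsplit : Finset.Icc 1 n = Finset.Icc 1 (J2-1) ∪ Finset.Icc J2 n := by
        ext a; simp only [Finset.mem_Icc, Finset.mem_union]; omega
      have hdisj : Disjoint (Finset.Icc 1 (J2-1)) (Finset.Icc J2 n) := by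
        apply Finset.disjoint_left.mpr
        intro a ha hb
        simp only [Finset.mem_Icc] at ha hb
        omega
      rw [hsplit, Finset.sum_union hdisj] at hNn
      have hpart1 : (∑ j ∈ Finset.Icc 1 (J2-1), (∑ i ∈ Finset.Icc j n, ε i)^2)
          ≤ (J2:ℝ) * ((J2:ℝ) * ε 1 + (bp - bm))^2 := by
        have hstep := Finset.sum_le_card_nsmul (Finset.Icc 1 (J2-1))
          (fun j => (∑ i ∈ Finset.Icc j n, ε i)^2) (((J2:ℝ) * ε 1 + (bp - bm))^2) ?_
        · rw [nsmul_eq_mul] at hstep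
          have hcard : ((Finset.Icc 1 (J2-1)).card : ℝ) ≤ (J2:ℝ) := by
            rw [Nat.card_Icc]
            exact_mod_cast (by omega : J2 - 1 + 1 - 1 ≤ J2)
          have hsq : (0:ℝ) ≤ ((J2:ℝ) * ε 1 + (bp - bm))^2 := sq_nonneg _
          nlinarith
        · intro j hj
          simp only [Finset.mem_Icc] at hj
          have h1 := hC3 n (by omega) j hj.1 (by omega)
          have h2 : 0 ≤ ∑ i ∈ Finset.Icc j n, ε i := Finset.sum_nonneg fun i hi => by
            simp only [Finset.mem_Icc] at hi
            exact (hpos i (by omega)).le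
          exact pow_le_pow_left₀ h2 h1 2
      have hpart2 : (∑ j ∈ Finset.Icc J2 n, (∑ i ∈ Finset.Icc j n, ε i)^2)
          ≤ 2 / c1 * (M - m') := by
        have h1 : ∀ j ∈ Finset.Icc J2 n,
            (∑ i ∈ Finset.Icc j n, ε i)^2 ≤ 2/c1 * (τ j - ψ (τ j)) := by
          intro j hj
          simp only [Finset.mem_Icc] at hj
          have h0 := hterm j hj.1 n hj.2
          rw [div_mul_eq_mul_div, le_div_iff₀ hc1pos]
          nlinarith
        have h2 := Finset.sum_le_sum h1
        rw [← Finset.mul_sum] at h2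
        have h4 : (∑ j ∈ Finset.Icc J2 n, (τ j - ψ (τ j)))
            ≤ ∑ j ∈ Finset.Icc (j0+1) ((n-1)+1), (τ j - ψ (τ j)) := by
          apply Finset.sum_le_sum_of_subset_of_nonneg
          · intro a ha
            simp only [Finset.mem_Icc] at *
            omega
          · intro j hj _
            simp only [Finset.mem_Icc] at hj
            have h5 := hsign1 (τ j) (le_of_lt (hup j (by omega)))
            linarith
        have h6 := hgapsum (n-1) (by omega)
        have h7 : (n-1)+1 = n := by omega
        rw [h7] at h4 h6
        have h8 : (0:ℝ) < 2 / c1 := by positivity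
        have h9 := mul_le_mul_of_nonneg_left (le_trans h4 h6) h8.le
        linarith
      linarith
  
  intro k hk x y
  have heq := hkey k hk
  have hTB : Filter.Tendsto (fun n => T k n - B k n) Filter.atTop (nhds 0) := by
    have h1 := (hτlim k hk).sub (hβlim k hk)
    rwa [heq, sub_self] at h1
  have hTBneg : Filter.Tendsto (fun n => -(T k n - B k n)) Filter.atTop (nhds 0) := by
    have h1 := hTB.neg
    rwa [neg_zero] at h1
  apply tendsto_of_tendsto_of_tendsto_of_le_of_le' hTBneg hTB
  · filter_upwards [Filter.eventually_ge_atTop k] with n hn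
    have h1 := hBΨ x n k hn
    have h2 := hΨT y n k hn
    linarith
  · filter_upwards [Filter.eventually_ge_atTop k] with n hn
    have h1 := hΨT x n k hn
    have h2 := hBΨ y n k hn
    linarith
end

section
/- Let d ≥ 1 be an integer, θ ∈ (0,1) with d·θ ≤ 1, and h ∈ ℝ. Then the map ψ(x) = h + d·arctanh(θ·tanh x) has exactly one fixed point in ℝ. -/
lemma tanh_mem_Ioo (x : ℝ) : Real.tanh x ∈ Set.Ioo (-1 : ℝ) 1 := by
  have hc := Real.cosh_pos x
  have h1 : Real.sinh x < Real.cosh x := Real.sinh_lt_cosh x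
  have h2 : Real.sinh (-x) < Real.cosh (-x) := Real.sinh_lt_cosh (-x)
  rw [Real.sinh_neg, Real.cosh_neg] at h2
  rw [Real.tanh_eq_sinh_div_cosh]
  constructor
  · rw [lt_div_iff₀ hc]; linarith
  · rw [div_lt_one hc]; linarith

lemma tanh_eq_zero_iff {x : ℝ} : Real.tanh x = 0 ↔ x = 0 := by
  rw [Real.tanh_eq_sinh_div_cosh, div_eq_zero_iff]
  constructor
  · rintro (hs | hc)
    · exact Real.sinh_eq_zero.mp hs
    · exact absurd hc (ne_of_gt (Real.cosh_pos x))
  · intro hx; left; simp [hx]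

lemma hasDerivAt_tanh' (x : ℝ) :
    HasDerivAt Real.tanh (1 - Real.tanh x ^ 2) x := by
  have hc := Real.cosh_pos x
  have h := (Real.hasDerivAt_sinh x).div (Real.hasDerivAt_cosh x) (ne_of_gt hc)
  have heq : Real.tanh = fun y => Real.sinh y / Real.cosh y := by
    funext y; exact Real.tanh_eq_sinh_div_cosh y
  rw [heq]
  refine h.congr_deriv ?_
  have hsq := Real.cosh_sq_sub_sinh_sq x
  have hc' : Real.cosh x ≠ 0 := ne_of_gt hc
  beta_reduce; rw [div_pow, one_sub_div (pow_ne_zero 2 hc')]; congr 1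
  nlinarith [hsq]

lemma hasDerivAt_arctanh {y : ℝ} (hy : y ∈ Set.Ioo (-1 : ℝ) 1) :
    HasDerivAt arctanh (1 / (1 - y ^ 2)) y := by
  obtain ⟨hy1, hy2⟩ := hy
  have hp1 : (0 : ℝ) < 1 + y := by linarith
  have hp2 : (0 : ℝ) < 1 - y := by linarith
  have h1 : HasDerivAt (fun t : ℝ => 1 + t) 1 y := by
    simpa using (hasDerivAt_id y).const_add 1
  have h2 : HasDerivAt (fun t : ℝ => 1 - t) (-1) y := by
    simpa using (hasDerivAt_id y).const_sub 1
  have hl1 : HasDerivAt (fun t : ℝ => Real.log (1 + t)) (1 / (1 + y)) y :=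
    h1.log (ne_of_gt hp1)
  have hl2 : HasDerivAt (fun t : ℝ => Real.log (1 - t)) (-1 / (1 - y)) y :=
    h2.log (ne_of_gt hp2)
  have hf : HasDerivAt (fun t : ℝ => (1 / 2) * (Real.log (1 + t) - Real.log (1 - t)))
      ((1 / 2) * (1 / (1 + y) - -1 / (1 - y))) y := (hl1.sub hl2).const_mul _
  have hval : (1 / 2 : ℝ) * (1 / (1 + y) - -1 / (1 - y)) = 1 / (1 - y ^ 2) := by
    have hys : (1 : ℝ) - y ^ 2 ≠ 0 := by nlinarith
    field_simp
    ring
  rw [hval] at hf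
  apply hf.congr_of_eventuallyEq
  have hmem : Set.Ioo (-1 : ℝ) 1 ∈ nhds y := Ioo_mem_nhds hy1 hy2
  filter_upwards [hmem] with t ht
  obtain ⟨ht1, ht2⟩ := ht
  have hp1' : (0 : ℝ) < 1 + t := by linarith
  have hp2' : (0 : ℝ) < 1 - t := by linarith
  rw [arctanh, Real.log_div (ne_of_gt hp1') (ne_of_gt hp2')]

lemma arctanh_le_arctanh {u v : ℝ} (hu : -1 < u) (huv : u ≤ v) (hv : v < 1) :
    arctanh u ≤ arctanh v := by
  have hu2 : (0 : ℝ) < 1 - u := by linarith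
  have hv2 : (0 : ℝ) < 1 - v := by linarith
  have hu1 : (0 : ℝ) < 1 + u := by linarith
  have hv1 : (0 : ℝ) < 1 + v := by linarith
  unfold arctanh
  have hle : (1 + u) / (1 - u) ≤ (1 + v) / (1 - v) := by
    rw [div_le_div_iff₀ hu2 hv2]; nlinarith
  have hpos : (0 : ℝ) < (1 + u) / (1 - u) := div_pos hu1 hu2
  have := Real.log_le_log hpos hle
  linarith

lemma arctanh_neg' {x : ℝ} (hx : x ∈ Set.Ioo (-1 : ℝ) 1) :
    arctanh (-x) = -arctanh x := by
  obtain ⟨h1, h2⟩ := hx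
  have hp1 : (0 : ℝ) < 1 + x := by linarith
  have hp2 : (0 : ℝ) < 1 - x := by linarith
  unfold arctanh
  have hinv : (1 + -x) / (1 - -x) = ((1 + x) / (1 - x))⁻¹ := by
    rw [inv_div]; ring_nf
  rw [hinv, Real.log_inv]
  ring

/-- if `d·θ ≤ 1` (high temperature), the recursion map
`ψ(x) = h + d·arctanh(θ·tanh x)` has exactly one fixed point. -/
theorem unique_fixed_point_high_temperature
    (d : ℕ) (hd : 1 ≤ d) (θ : ℝ) (hθ : θ ∈ Set.Ioo (0 : ℝ) 1)
    (hdθ : (d : ℝ) * θ ≤ 1) (h : ℝ) :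
    ∃! x : ℝ, h + d * arctanh (θ * Real.tanh x) = x := by
  obtain ⟨hθ0, hθ1⟩ := hθ
  have hd1 : (1 : ℝ) ≤ (d : ℝ) := by exact_mod_cast hd
  set ψ : ℝ → ℝ := fun x => h + d * arctanh (θ * Real.tanh x) with hψdef
  have harg : ∀ x : ℝ, θ * Real.tanh x ∈ Set.Ioo (-1 : ℝ) 1 := by
    intro x
    obtain ⟨ht1, ht2⟩ := tanh_mem_Ioo x
    constructor <;> nlinarith
  have hderiv : ∀ x : ℝ,
      HasDerivAt ψ ((d : ℝ) * ((1 / (1 - (θ * Real.tanh x) ^ 2)) *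
        (θ * (1 - Real.tanh x ^ 2)))) x := by
    intro x
    have ht : HasDerivAt (fun y : ℝ => θ * Real.tanh y) (θ * (1 - Real.tanh x ^ 2)) x :=
      (hasDerivAt_tanh' x).const_mul θ
    have ha := (hasDerivAt_arctanh (harg x)).comp x ht
    exact (ha.const_mul (d : ℝ)).const_add h
  have hcont : Continuous ψ :=
    continuous_iff_continuousAt.2 fun x => (hderiv x).continuousAt
  -- the derivative is < 1 away from 0
  have hbound : ∀ c : ℝ, c ≠ 0 →
      (d : ℝ) * ((1 / (1 - (θ * Real.tanh c) ^ 2)) * (θ * (1 - Real.tanh c ^ 2))) < 1 := by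
    intro c hc
    have ht0 : Real.tanh c ≠ 0 := fun hcon => hc (tanh_eq_zero_iff.mp hcon)
    set t := Real.tanh c with htdef
    obtain ⟨ht1, ht2⟩ := tanh_mem_Ioo c
    rw [← htdef] at ht1 ht2
    have ht2pos : 0 < t ^ 2 := pow_two_pos_of_ne_zero ht0
    have ht2lt : t ^ 2 < 1 := by nlinarith
    have hden : 0 < 1 - (θ * t) ^ 2 := by
      have h1 : (0 : ℝ) ≤ (1 - θ ^ 2) * t ^ 2 := mul_nonneg (by nlinarith) (le_of_lt ht2pos)
      nlinarith [h1, ht2lt]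
    have heq : (d : ℝ) * ((1 / (1 - (θ * t) ^ 2)) * (θ * (1 - t ^ 2)))
        = ((d : ℝ) * θ * (1 - t ^ 2)) / (1 - (θ * t) ^ 2) := by ring
    rw [heq, div_lt_one hden]
    nlinarith [mul_pos ht2pos (mul_pos hθ0 (sub_pos.mpr (lt_of_lt_of_le hθ1 hd1)))]
  -- mean value: strict sub-slope on intervals avoiding 0
  have noZero : ∀ x y : ℝ, x < y → (∀ c ∈ Set.Ioo x y, c ≠ 0) → ψ y - ψ x < y - x := by
    intro x y hxy hne
    obtain ⟨c, hc, hceq⟩ := exists_hasDerivAt_eq_slope ψ _ hxy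
      hcont.continuousOn (fun z _ => hderiv z)
    have hlt := hbound c (hne c hc)
    rw [hceq, div_lt_one (sub_pos.mpr hxy)] at hlt
    exact hlt
  have strict : ∀ x y : ℝ, x < y → ψ y - ψ x < y - x := by
    intro x y hxy
    rcases le_or_gt 0 x with h0x | hx0
    · exact noZero x y hxy fun c hc => ne_of_gt (lt_of_le_of_lt h0x hc.1)
    · rcases le_or_gt y 0 with hy0 | h0y
      · exact noZero x y hxy fun c hc => ne_of_lt (lt_of_lt_of_le hc.2 hy0)
      · have h1 := noZero x 0 hx0 fun c hc => ne_of_lt hc.2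
        have h2 := noZero 0 y h0y fun c hc => ne_of_gt hc.1
        linarith
  -- existence via IVT
  have hθIoo : θ ∈ Set.Ioo (-1 : ℝ) 1 := ⟨by linarith, hθ1⟩
  have hA0 : 0 ≤ arctanh θ := by
    have h0 : arctanh 0 ≤ arctanh θ := arctanh_le_arctanh (by norm_num) (le_of_lt hθ0) hθ1
    have : arctanh 0 = 0 := by simp [arctanh]
    linarith
  set C : ℝ := (d : ℝ) * arctanh θ with hCdef
  have hC0 : 0 ≤ C := mul_nonneg (by positivity) hA0
  have hup : ∀ x : ℝ, ψ x ≤ h + C := by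
    intro x
    obtain ⟨ht1, ht2⟩ := tanh_mem_Ioo x
    have hle : arctanh (θ * Real.tanh x) ≤ arctanh θ :=
      arctanh_le_arctanh (harg x).1 (by nlinarith) hθ1
    have : (d : ℝ) * arctanh (θ * Real.tanh x) ≤ (d : ℝ) * arctanh θ :=
      mul_le_mul_of_nonneg_left hle (by positivity)
    simp only [hψdef, hCdef]
    linarith
  have hlow : ∀ x : ℝ, h - C ≤ ψ x := by
    intro x
    obtain ⟨ht1, ht2⟩ := tanh_mem_Ioo x
    have hle : arctanh (-θ) ≤ arctanh (θ * Real.tanh x) :=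
      arctanh_le_arctanh (by linarith) (by nlinarith) (harg x).2
    rw [arctanh_neg' hθIoo] at hle
    have : (d : ℝ) * (-arctanh θ) ≤ (d : ℝ) * arctanh (θ * Real.tanh x) :=
      mul_le_mul_of_nonneg_left hle (by positivity)
    simp only [hψdef, hCdef]
    nlinarith
  set g : ℝ → ℝ := fun x => ψ x - x with hgdef
  have hgcont : Continuous g := hcont.sub continuous_id
  have hab : h - C ≤ h + C := by linarith
  have hga : 0 ≤ g (h - C) := by
    have := hlow (h - C); simp only [hgdef]; linarith
  have hgb : g (h + C) ≤ 0 := by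
    have := hup (h + C); simp only [hgdef]; linarith
  have hmem : (0 : ℝ) ∈ Set.Icc (g (h + C)) (g (h - C)) := ⟨hgb, hga⟩
  obtain ⟨x, -, hgx⟩ := intermediate_value_Icc' hab hgcont.continuousOn hmem
  have hfix : ψ x = x := by
    have : ψ x - x = 0 := hgx
    linarith
  refine ⟨x, hfix, fun y hy => ?_⟩
  -- uniqueness
  have hy' : ψ y = y := hy
  rcases lt_trichotomy y x with hlt | heq | hgt
  · have := strict y x hlt
    rw [hfix, hy'] at this
    linarith
  · exact heq
  · have := strict x y hgt
    rw [hfix, hy'] at this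
    linarith
end

section
/- Let θ ∈ (0,1). Then the function F(x) = arctanh(θ·tanh x) is strictly concave on (0,∞); consequently, for any h ∈ ℝ and integer d ≥ 1, ψ(x) = h + d·F(x) is strictly concave on (0,∞). -/
/-- for `θ ∈ (0,1)`, `F(x) = arctanh(θ·tanh x)` is strictly concave on
`(0,∞)`; consequently so is `ψ(x) = h + d·F(x)` for any `h ∈ ℝ` and integer `d ≥ 1`. -/
theorem transfer_function_strictly_concave
    (θ : ℝ) (hθ : θ ∈ Set.Ioo (0 : ℝ) 1) :
    StrictConcaveOn ℝ (Set.Ioi (0 : ℝ)) (fun x => arctanh (θ * Real.tanh x)) ∧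
    ∀ (h : ℝ) (d : ℕ), 1 ≤ d →
      StrictConcaveOn ℝ (Set.Ioi (0 : ℝ))
        (fun x => h + d * arctanh (θ * Real.tanh x)) := by
  obtain ⟨hθ0, hθ1⟩ := hθ
  set a : ℝ := 1 + θ with ha_def
  set b : ℝ := 1 - θ with hb_def
  have ha : 0 < a := by simp [ha_def]; linarith
  have hb : 0 < b := by simp [hb_def]; linarith
  have hab : b < a := by simp [ha_def, hb_def]; linarith
  -- the transfer function in exponential form
  set g : ℝ → ℝ := fun x => (1/2) *
      (Real.log (a * Real.exp (2*x) + b) - Real.log (b * Real.exp (2*x) + a)) with hg_def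
  have hden1 : ∀ x : ℝ, 0 < a * Real.exp (2*x) + b := fun x => by positivity
  have hden2 : ∀ x : ℝ, 0 < b * Real.exp (2*x) + a := fun x => by positivity
  have key : (fun x => arctanh (θ * Real.tanh x)) = g := by
    funext x
    have he : (0:ℝ) < Real.exp x := Real.exp_pos x
    have he2 : Real.exp (2*x) = Real.exp x * Real.exp x := by
      rw [two_mul, Real.exp_add]
    have hcosh : (0:ℝ) < Real.cosh x := Real.cosh_pos x
    have htanh : Real.tanh x = Real.sinh x / Real.cosh x := Real.tanh_eq_sinh_div_cosh x
    have hquot : (1 + θ * Real.tanh x) / (1 - θ * Real.tanh x)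
        = (a * Real.exp (2*x) + b) / (b * Real.exp (2*x) + a) := by
      rw [htanh, Real.sinh_eq, Real.cosh_eq, Real.exp_neg]
      rw [div_eq_div_iff]
      · rw [ha_def, hb_def]
        field_simp
        rw [he2]
        ring
      · have h1 : θ * ((Real.exp x - (Real.exp x)⁻¹)/2 / ((Real.exp x + (Real.exp x)⁻¹)/2))
            = θ * ((Real.exp x * Real.exp x - 1) / (Real.exp x * Real.exp x + 1)) := by
          congr 1
          field_simp
        rw [h1]
        have hlt : θ * ((Real.exp x * Real.exp x - 1) / (Real.exp x * Real.exp x + 1)) < 1 := by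
          have habs : (Real.exp x * Real.exp x - 1) / (Real.exp x * Real.exp x + 1) < 1 := by
            rw [div_lt_one (by positivity)]; linarith
          have hge : -1 < (Real.exp x * Real.exp x - 1) / (Real.exp x * Real.exp x + 1) := by
            rw [neg_lt, neg_div', div_lt_one (by positivity)]; nlinarith
          nlinarith
        linarith
      · exact ne_of_gt (hden2 x)
    show (1/2) * Real.log ((1 + θ * Real.tanh x) / (1 - θ * Real.tanh x)) = _
    rw [hquot, Real.log_div (ne_of_gt (hden1 x)) (ne_of_gt (hden2 x))]
  -- derivative of g
  set φ : ℝ → ℝ := fun x =>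
      a * Real.exp (2*x) / (a * Real.exp (2*x) + b)
        - b * Real.exp (2*x) / (b * Real.exp (2*x) + a) with hφ_def
  have hder : ∀ x : ℝ, HasDerivAt g (φ x) x := by
    intro x
    have hexp : HasDerivAt (fun x : ℝ => Real.exp (2*x)) (Real.exp (2*x) * 2) x := by
      have h2x : HasDerivAt (fun x : ℝ => 2*x) 2 x := by
        simpa using (hasDerivAt_id x).const_mul 2
      exact h2x.exp
    have h1 : HasDerivAt (fun x : ℝ => Real.log (a * Real.exp (2*x) + b))
        ((a * (Real.exp (2*x) * 2)) / (a * Real.exp (2*x) + b)) x :=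
      ((hexp.const_mul a).add_const b).log (ne_of_gt (hden1 x))
    have h2 : HasDerivAt (fun x : ℝ => Real.log (b * Real.exp (2*x) + a))
        ((b * (Real.exp (2*x) * 2)) / (b * Real.exp (2*x) + a)) x :=
      ((hexp.const_mul b).add_const a).log (ne_of_gt (hden2 x))
    have := ((h1.sub h2).const_mul (1/2 : ℝ))
    refine this.congr_deriv ?_
    simp only [hφ_def]
    field_simp
  have hderiv : ∀ x : ℝ, deriv g x = φ x := fun x => (hder x).deriv
  have hanti : StrictAntiOn (deriv g) (interior (Set.Ioi (0:ℝ))) := by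
    rw [interior_Ioi]
    intro x hx y hy hxy
    rw [hderiv, hderiv]
    set u : ℝ := Real.exp (2*x) with hu_def
    set v : ℝ := Real.exp (2*y) with hv_def
    have hu1 : 1 < u := by
      rw [hu_def, show (1:ℝ) = Real.exp 0 by simp]
      exact Real.exp_lt_exp.2 (by simp at hx ⊢; linarith)
    have huv : u < v := Real.exp_lt_exp.2 (by linarith)
    have hv1 : 1 < v := hu1.trans huv
    have hd1 : 0 < a * u + b := by positivity
    have hd2 : 0 < b * u + a := by positivity
    have hd3 : 0 < a * v + b := by positivity
    have hd4 : 0 < b * v + a := by positivity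
    show a * v / (a * v + b) - b * v / (b * v + a)
        < a * u / (a * u + b) - b * u / (b * u + a)
    rw [div_sub_div _ _ (ne_of_gt hd3) (ne_of_gt hd4),
        div_sub_div _ _ (ne_of_gt hd1) (ne_of_gt hd2),
        div_lt_div_iff₀ (by positivity) (by positivity)]
    have hfact : 0 < (a^2 - b^2) * (a*b) * (v - u) * (u*v - 1) := by
      have h1 : 0 < a^2 - b^2 := by nlinarith
      have h2 : 0 < v - u := by linarith
      have h3 : 0 < u*v - 1 := by nlinarith
      positivity
    nlinarith [hfact]
  have hF : StrictConcaveOn ℝ (Set.Ioi (0 : ℝ)) (fun x => arctanh (θ * Real.tanh x)) := by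
    rw [key]
    exact StrictAntiOn.strictConcaveOn_of_deriv (convex_Ioi 0)
      (fun x _ => ((hder x).differentiableAt.continuousAt).continuousWithinAt) hanti
  refine ⟨hF, fun h d hd => ?_⟩
  constructor
  · exact hF.1
  · intro x hx y hy hxy p q hp hq hpq
    have base := hF.2 hx hy hxy hp hq hpq
    have hd1 : (1:ℝ) ≤ (d:ℝ) := by exact_mod_cast hd
    simp only [smul_eq_mul] at base ⊢
    have hdpos : (0:ℝ) < (d:ℝ) := by linarith
    have hmul := mul_lt_mul_of_pos_left base hdpos
    have hh : p*h + q*h = h := by rw [← add_mul, hpq, one_mul]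
    nlinarith [hmul, hh]
end

section
/- Let d ≥ 2 be an integer, θ ∈ (0,1), h ∈ ℝ, ψ(x) = h + d·arctanh(θ·tanh x), and let b⁻ < 0 be a fixed point of ψ with λ := ψ'(b⁻) < 1. Let (ε_n)_{n≥1} be a nonnegative sequence and define ψ̃_{n,n}(x) = ψ(x) - ε_n and ψ̃_{k,n}(x) = ψ(ψ̃_{k+1,n}(x)) - ε_k for k < n. Then for all 1 ≤ k ≤ n: b⁻ - Σ_{i=k}^n λ^{i-k}·ε_i ≤ ψ̃_{k,n}(b⁻) ≤ b⁻. -/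
lemma tanh_sq_lt_one' (x : ℝ) : Real.tanh x ^ 2 < 1 := by
  have hc := Real.cosh_pos x
  have h1 := Real.cosh_sq_sub_sinh_sq x
  rw [Real.tanh_eq_sinh_div_cosh, div_pow, div_lt_one (by positivity)]
  nlinarith

lemma bounds' (θ : ℝ) (hθ0 : 0 < θ) (hθ1 : θ < 1) (y : ℝ) :
    0 < 1 + θ * Real.tanh y ∧ 0 < 1 - θ * Real.tanh y ∧
      0 < 1 - θ ^ 2 * Real.tanh y ^ 2 := by
  have h := tanh_sq_lt_one' y
  refine ⟨?_, ?_, ?_⟩ <;>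
    nlinarith [sq_nonneg (1 + θ * Real.tanh y), sq_nonneg (1 - θ * Real.tanh y),
      sq_nonneg (Real.tanh y), sq_nonneg θ]

lemma hasDerivAt_psi' (d : ℕ) (θ h : ℝ) (hθ0 : 0 < θ) (hθ1 : θ < 1) (x : ℝ) :
    HasDerivAt (fun x => h + d * arctanh (θ * Real.tanh x))
      ((d : ℝ) * θ * (1 - Real.tanh x ^ 2) / (1 - θ ^ 2 * Real.tanh x ^ 2)) x := by
  obtain ⟨h1, h2, h3⟩ := bounds' θ hθ0 hθ1 x
  have hfun : (fun x => h + (d : ℝ) * arctanh (θ * Real.tanh x)) =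
      fun x => h + (d : ℝ) * ((1 / 2) *
        (Real.log (1 + θ * Real.tanh x) - Real.log (1 - θ * Real.tanh x))) := by
    funext y
    obtain ⟨g1, g2, _⟩ := bounds' θ hθ0 hθ1 y
    rw [arctanh, Real.log_div g1.ne' g2.ne']
  rw [hfun]
  have inner1 : HasDerivAt (fun x => 1 + θ * Real.tanh x) (θ * (1 - Real.tanh x ^ 2)) x :=
    ((hasDerivAt_tanh' x).const_mul θ).const_add 1
  have inner2 : HasDerivAt (fun x => 1 - θ * Real.tanh x) (-(θ * (1 - Real.tanh x ^ 2))) x :=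
    ((hasDerivAt_tanh' x).const_mul θ).const_sub 1
  have hlog1 := inner1.log h1.ne'
  have hlog2 := inner2.log h2.ne'
  have H := (((hlog1.sub hlog2).const_mul (1 / 2 : ℝ)).const_mul (d : ℝ)).const_add h
  refine H.congr_deriv ?_
  have ht := tanh_sq_lt_one' x
  field_simp
  ring

/-- near the stable fixed point `b⁻ < 0` with `λ = ψ'(b⁻) < 1`, the
perturbed minus orbit satisfies
`b⁻ - Σ_{i=k}^n λ^{i-k} ε_i ≤ ψ̃_{k,n}(b⁻) ≤ b⁻` for all `1 ≤ k ≤ n`. -/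
theorem perturbed_minus_orbit_geometric_bound
    (d : ℕ) (hd : 2 ≤ d) (θ h : ℝ) (hθ : θ ∈ Set.Ioo (0 : ℝ) 1)
    (ψ : ℝ → ℝ) (hψ : ψ = fun x => h + d * arctanh (θ * Real.tanh x))
    (bm : ℝ) (hbm : bm < 0) (hfixm : ψ bm = bm)
    (lam : ℝ) (hlam : lam = deriv ψ bm) (hlam1 : lam < 1)
    (ε : ℕ → ℝ) (hpos : ∀ n, 0 ≤ ε n)
    (Ψ : ℕ → ℕ → ℝ → ℝ)
    (hdiag : ∀ n x, Ψ n n x = ψ x - ε n)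
    (hrec : ∀ k n, k < n → ∀ x, Ψ k n x = ψ (Ψ (k + 1) n x) - ε k) :
    ∀ k n : ℕ, 1 ≤ k → k ≤ n →
      bm - ∑ i ∈ Finset.Icc k n, lam ^ (i - k) * ε i ≤ Ψ k n bm ∧
      Ψ k n bm ≤ bm := by
  obtain ⟨hθ0, hθ1⟩ := hθ
  set g : ℝ → ℝ := fun x => (d : ℝ) * θ * (1 - Real.tanh x ^ 2) / (1 - θ ^ 2 * Real.tanh x ^ 2)
    with hg
  have hder : ∀ x, HasDerivAt ψ (g x) x := by
    intro x; rw [hψ]; exact hasDerivAt_psi' d θ h hθ0 hθ1 x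
  have hgnonneg : ∀ x, 0 ≤ g x := by
    intro x
    have h3 := (bounds' θ hθ0 hθ1 x).2.2
    have ht := tanh_sq_lt_one' x
    have hdn : (0:ℝ) ≤ (d:ℝ) := Nat.cast_nonneg d
    rw [hg]
    exact div_nonneg (mul_nonneg (mul_nonneg hdn hθ0.le) (by nlinarith)) h3.le
  have hlamg : lam = g bm := by rw [hlam, (hder bm).deriv]
  have hlam0 : 0 ≤ lam := hlamg ▸ hgnonneg bm
  -- ψ is monotone
  have hmono : Monotone ψ :=
    monotone_of_deriv_nonneg (fun x => (hder x).differentiableAt)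
      (fun x => (hder x).deriv ▸ hgnonneg x)
  -- g x ≤ lam for x ≤ bm
  have hgle : ∀ x ≤ bm, g x ≤ lam := by
    intro x hx
    rw [hlamg]
    -- tanh bm ^ 2 ≤ tanh x ^ 2
    have hs : Real.sinh x ≤ Real.sinh bm := Real.sinh_le_sinh.2 hx
    have hsneg : Real.sinh bm < 0 := Real.sinh_neg_iff.2 hbm
    have hsq : Real.sinh bm ^ 2 ≤ Real.sinh x ^ 2 := by nlinarith
    have htanh : ∀ y : ℝ, Real.tanh y ^ 2 = Real.sinh y ^ 2 / (Real.sinh y ^ 2 + 1) := by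
      intro y
      have hc := Real.cosh_pos y
      have := Real.cosh_sq y
      rw [Real.tanh_eq_sinh_div_cosh, div_pow, this]
    have htle : Real.tanh bm ^ 2 ≤ Real.tanh x ^ 2 := by
      rw [htanh, htanh]
      rw [div_le_div_iff₀ (by positivity) (by positivity)]
      nlinarith
    have h3x := (bounds' θ hθ0 hθ1 x).2.2
    have h3b := (bounds' θ hθ0 hθ1 bm).2.2
    rw [hg]
    simp only
    rw [div_le_div_iff₀ h3x h3b]
    have hdn : (0:ℝ) ≤ (d:ℝ) := Nat.cast_nonneg d
    have hA : (0:ℝ) ≤ (d:ℝ) * θ * ((1 - θ ^ 2) * (Real.tanh x ^ 2 - Real.tanh bm ^ 2)) :=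
      mul_nonneg (mul_nonneg hdn hθ0.le)
        (mul_nonneg (by nlinarith) (sub_nonneg.2 htle))
    nlinarith [hA]
  -- mean value inequality on Iic bm
  have hslope : ∀ y ≤ bm, ψ bm - ψ y ≤ lam * (bm - y) := by
    intro y hy
    have hφ : ∀ x, HasDerivAt (fun z => lam * z - ψ z) (lam - g x) x := fun x => by
      exact (((hasDerivAt_id x).const_mul lam).sub (hder x)).congr_deriv (by ring)
    have hmonoφ : MonotoneOn (fun z => lam * z - ψ z) (Set.Iic bm) := by
      apply monotoneOn_of_deriv_nonneg (convex_Iic bm)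
      · have hdiff : Differentiable ℝ ψ := fun x => (hder x).differentiableAt
        exact (Continuous.sub (continuous_const.mul continuous_id)
          hdiff.continuous).continuousOn
      · exact fun x _ => ((hφ x).differentiableAt).differentiableWithinAt
      · intro x hx
        rw [(hφ x).deriv]
        have hxle : x ≤ bm := le_of_lt (by simpa using hx)
        linarith [hgle x hxle]
    have := hmonoφ (Set.mem_Iic.2 hy) (Set.mem_Iic.2 le_rfl) hy
    simp only at this
    linarith
  -- sum identity
  have hsum : ∀ k n : ℕ, k ≤ n →
      ∑ i ∈ Finset.Icc k n, lam ^ (i - k) * ε i =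
        ε k + lam * ∑ i ∈ Finset.Icc (k + 1) n, lam ^ (i - (k + 1)) * ε i := by
    intro k n hkn
    have hins : Finset.Icc k n = insert k (Finset.Icc (k + 1) n) := by
      ext j; simp only [Finset.mem_Icc, Finset.mem_insert]; omega
    rw [hins, Finset.sum_insert (by simp), Nat.sub_self, pow_zero, one_mul,
      Finset.mul_sum]
    congr 1
    apply Finset.sum_congr rfl
    intro i hi
    have hik : k + 1 ≤ i := (Finset.mem_Icc.1 hi).1
    have : i - k = (i - (k + 1)) + 1 := by omega
    rw [this, pow_succ]
    ring
  -- main induction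
  have main : ∀ m k : ℕ,
      bm - ∑ i ∈ Finset.Icc k (k + m), lam ^ (i - k) * ε i ≤ Ψ k (k + m) bm ∧
      Ψ k (k + m) bm ≤ bm := by
    intro m
    induction m with
    | zero =>
      intro k
      simp only [Nat.add_zero, Finset.Icc_self, Finset.sum_singleton, Nat.sub_self,
        pow_zero, one_mul, hdiag, hfixm]
      constructor
      · linarith
      · linarith [hpos k]
    | succ m ih =>
      intro k
      have hk : k < k + (m + 1) := by omega
      have hrw := hrec k (k + (m + 1)) hk bm
      have heq : (k + 1) + m = k + (m + 1) := by omega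
      obtain ⟨ih1, ih2⟩ := heq ▸ ih (k + 1)
      set y := Ψ (k + 1) (k + (m + 1)) bm with hy
      set S' := ∑ i ∈ Finset.Icc (k + 1) (k + (m + 1)), lam ^ (i - (k + 1)) * ε i with hS'
      have hub : ψ y ≤ bm := hfixm ▸ hmono ih2
      have hlb : bm - lam * S' ≤ ψ y := by
        have h1 := hslope y ih2
        have h2 : bm - y ≤ S' := by linarith
        have h3 : lam * (bm - y) ≤ lam * S' := mul_le_mul_of_nonneg_left h2 hlam0
        linarith [hfixm ▸ h1]
      rw [hrw, hsum k (k + (m + 1)) hk.le]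
      constructor
      · linarith
      · linarith [hpos k]
  intro k n _ hkn
  have : n = k + (n - k) := by omega
  rw [this]
  exact main (n - k) k
end
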